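/- arXiv:1401.1652 — 8 statements merged into one kernel-verified Lean document; each statement's English description precedes it below -/
import Mathlib

section
/- Let 0 → H → G → G' → 0 be a short exact sequence of finite abelian ℓ-groups. Write G ≅ ⊕_{i=1}^r ℤ/ℓ^{m_i}ℤ with 0 ≤ m_1 ≤ … ≤ m_r, and H ≅ ⊕_{i=1}^s ℤ/ℓ^{n_i}ℤ with 0 ≤ n_1 ≤ … ≤ n_s (allowing zero exponents). If G' can be generated by r − s elements, then m_i ≤ n_i for all 1 ≤ i ≤ s. -/
/-- scalar multiplication by `c` as an `AddMonoidHom`. -/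
def smulHom (G : Type) [AddCommMonoid G] (c : ℕ) : G →+ G where
  toFun := fun g => c • g
  map_zero' := smul_zero c
  map_add' := fun a b => smul_add c a b

@[simp] lemma smulHom_apply {G : Type} [AddCommMonoid G] (c : ℕ) (g : G) :
    smulHom G c g = c • g := rfl

/-- first-iso counting -/
lemma card_eq_range_mul_ker {A B : Type} [AddCommGroup A] [AddCommGroup B] [Finite A]
    (f : A →+ B) : Nat.card A = Nat.card f.range * Nat.card f.ker := by
  rw [AddSubgroup.card_eq_card_quotient_mul_card_addSubgroup f.ker]
  congr 1
  exact Nat.card_congr (QuotientAddGroup.quotientKerEquivRange f).toEquiv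

/-- Every element of a quotient generated by `t` elements, each killed by `ℓ`, is a bounded
combination. -/
lemma card_le_of_gen_torsion {Q : Type} [AddCommGroup Q] [Finite Q] (ℓ t : ℕ) (hℓ : 0 < ℓ)
    (g : Fin t → Q) (hg : AddSubgroup.closure (Set.range g) = ⊤)
    (htor : ∀ d : Q, ℓ • d = 0) : Nat.card Q ≤ ℓ ^ t := by
  classical
  -- surjection from (Fin t → Fin ℓ)
  have hsurj : Function.Surjective (fun a : Fin t → Fin ℓ => ∑ j, (a j : ℕ) • g j) := by
    intro x
    have hx : x ∈ AddSubgroup.closure (Set.range g) := by rw [hg]; trivial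
    have key : ∃ a : Fin t → ℕ, ∑ j, (a j) • g j = x := by
      induction hx using AddSubgroup.closure_induction with
      | mem z hz =>
          obtain ⟨j, rfl⟩ := hz
          exact ⟨fun i => if i = j then 1 else 0, by simp⟩
      | zero => exact ⟨fun _ => 0, by simp⟩
      | add z w _ _ ihz ihw =>
          obtain ⟨a, ha⟩ := ihz; obtain ⟨b, hb⟩ := ihw
          exact ⟨fun i => a i + b i, by
            simp only [add_smul, Finset.sum_add_distrib, ha, hb]⟩
      | neg z _ ihz =>
          obtain ⟨a, ha⟩ := ihz
          refine ⟨fun i => ℓ - a i % ℓ, ?_⟩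
          have : (∑ j, (ℓ - a j % ℓ) • g j) + (∑ j, (a j) • g j) = 0 := by
            rw [← Finset.sum_add_distrib]
            refine Finset.sum_eq_zero fun j _ => ?_
            rw [← add_smul]
            have h1 : (ℓ - a j % ℓ) + a j = ℓ * (a j / ℓ) + ℓ := by
              have h2 := Nat.mod_lt (a j) hℓ
              have h3 := Nat.div_add_mod (a j) ℓ
              omega
            simp [h1, add_smul, mul_smul, htor]
          rw [ha] at this
          exact eq_neg_of_add_eq_zero_left this
    obtain ⟨a, ha⟩ := key
    refine ⟨fun j => ⟨a j % ℓ, Nat.mod_lt _ hℓ⟩, ?_⟩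
    simp only
    rw [← ha]
    refine Finset.sum_congr rfl fun j _ => ?_
    conv_rhs => rw [← Nat.div_add_mod (a j) ℓ]
    simp [add_smul, mul_smul, htor]
  calc Nat.card Q ≤ Nat.card (Fin t → Fin ℓ) := Nat.card_le_card_of_surjective _ hsurj
    _ = ℓ ^ t := by simp [Nat.card_pi]

/-- In a finite abelian group generated by `t` elements, the `ℓ`-torsion has at most `ℓ^t`
elements. -/
lemma card_ltorsion_le {D : Type} [AddCommGroup D] [Finite D] (ℓ t : ℕ) (hℓ : 0 < ℓ)
    (y : Fin t → D) (hy : AddSubgroup.closure (Set.range y) = ⊤) :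
    Nat.card {d : D // ℓ • d = 0} ≤ ℓ ^ t := by
  classical
  set μ : D →+ D := smulHom D ℓ with hμ
  let q : D →+ D ⧸ μ.range := QuotientAddGroup.mk' μ.range
  have hqsurj : Function.Surjective q := QuotientAddGroup.mk'_surjective _
  have htor : ∀ d : D ⧸ μ.range, ℓ • d = 0 := by
    intro d
    obtain ⟨x, rfl⟩ := hqsurj d
    rw [← map_nsmul q ℓ x]
    exact (QuotientAddGroup.eq_zero_iff _).mpr ⟨x, rfl⟩
  have hgenQ : AddSubgroup.closure (Set.range (fun j => q (y j))) = ⊤ := by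
    have h1 : AddSubgroup.map q (AddSubgroup.closure (Set.range y)) =
        AddSubgroup.closure (q '' Set.range y) := AddMonoidHom.map_closure q _
    rw [hy] at h1
    rw [← Set.range_comp] at h1
    have h2 : AddSubgroup.map q ⊤ = ⊤ :=
      AddSubgroup.map_top_of_surjective q hqsurj
    rw [h2] at h1
    exact h1.symm
  have hQ : Nat.card (D ⧸ μ.range) ≤ ℓ ^ t :=
    card_le_of_gen_torsion ℓ t hℓ _ hgenQ htor
  -- counting: card ker μ = card (D ⧸ range μ)
  have h1 : Nat.card D = Nat.card μ.range * Nat.card μ.ker := card_eq_range_mul_ker μ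
  have h2 : Nat.card D = Nat.card (D ⧸ μ.range) * Nat.card μ.range :=
    AddSubgroup.card_eq_card_quotient_mul_card_addSubgroup μ.range
  have hpos : 0 < Nat.card μ.range := Nat.card_pos
  have hker : Nat.card μ.ker = Nat.card (D ⧸ μ.range) := by
    have := h1.symm.trans h2
    exact Nat.eq_of_mul_eq_mul_left hpos (by linarith [this])
  have hsub : Nat.card {d : D // ℓ • d = 0} = Nat.card μ.ker := by
    apply Nat.card_congr
    exact Equiv.subtypeEquivRight (fun d => by
      simp [AddMonoidHom.mem_ker, hμ])
  rw [hsub, hker]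
  exact hQ

/-- Key rank-type inequality: if `G = U + ⟨y₁,…,y_t⟩`, then the `ℓ`-torsion of `ℓᵏG` is at
most `ℓ^t` times the `ℓ`-torsion of `ℓᵏU`. -/
lemma lemA (G : Type) [AddCommGroup G] [Finite G] (ℓ k t : ℕ) (hℓ : 0 < ℓ)
    (U : AddSubgroup G) (y : Fin t → G)
    (hUy : U ⊔ AddSubgroup.closure (Set.range y) = ⊤) :
    Nat.card {g : G // ℓ • g = 0 ∧ ∃ z, ℓ ^ k • z = g} ≤
      ℓ ^ t * Nat.card {x : G // x ∈ U.map (smulHom G (ℓ ^ k)) ∧ ℓ • x = 0} := by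
  classical
  set μk : G →+ G := smulHom G (ℓ ^ k) with hμk
  set U₂ : AddSubgroup G := U.map μk with hU₂
  set V : AddSubgroup G := AddSubgroup.closure (Set.range y) with hV
  set V₂ : AddSubgroup G := V.map μk with hV₂
  let q : G →+ G ⧸ U₂ := QuotientAddGroup.mk' U₂
  set Vbar : AddSubgroup (G ⧸ U₂) := V₂.map q with hVbar
  -- generators of Vbar
  have hmemVbar : ∀ j, q (ℓ ^ k • y j) ∈ Vbar := by
    intro j
    refine AddSubgroup.mem_map_of_mem q ?_
    exact AddSubgroup.mem_map_of_mem μk (AddSubgroup.subset_closure ⟨j, rfl⟩)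
  let gbar : Fin t → Vbar := fun j => ⟨q (ℓ ^ k • y j), hmemVbar j⟩
  have hVbar_eq : AddSubgroup.closure (Set.range (fun j => q (ℓ ^ k • y j))) = Vbar := by
    have h1 : V₂ = AddSubgroup.closure (Set.range (fun j => ℓ ^ k • y j)) := by
      rw [hV₂, hV, AddMonoidHom.map_closure, ← Set.range_comp]
      rfl
    rw [hVbar, h1, AddMonoidHom.map_closure, ← Set.range_comp]
    rfl
  have hgen : AddSubgroup.closure (Set.range gbar) = ⊤ := by
    apply AddSubgroup.map_injective Vbar.subtype_injective
    rw [AddMonoidHom.map_closure, ← Set.range_comp]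
    have h2 : (AddSubgroup.map Vbar.subtype ⊤) = Vbar := by
      rw [← AddMonoidHom.range_eq_map, AddSubgroup.range_subtype]
    rw [h2]
    have h3 : (Vbar.subtype ∘ gbar) = fun j => q (ℓ ^ k • y j) := rfl
    rw [h3, hVbar_eq]
  have htorbound : Nat.card {d : Vbar // ℓ • d = 0} ≤ ℓ ^ t :=
    card_ltorsion_le ℓ t hℓ gbar hgen
  -- the map f from W to torsion of Vbar
  have hqVbar : ∀ w : G, (∃ z, ℓ ^ k • z = w) → q w ∈ Vbar := by
    rintro w ⟨z, rfl⟩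
    have hz : z ∈ U ⊔ V := by rw [hUy]; trivial
    rw [AddSubgroup.mem_sup] at hz
    obtain ⟨u, hu, v, hv, rfl⟩ := hz
    have : q (ℓ ^ k • (u + v)) = q (ℓ ^ k • v) := by
      rw [smul_add, map_add]
      have : q (ℓ ^ k • u) = 0 :=
        (QuotientAddGroup.eq_zero_iff _).mpr (AddSubgroup.mem_map_of_mem μk hu)
      rw [this, zero_add]
    rw [this]
    exact AddSubgroup.mem_map_of_mem q (AddSubgroup.mem_map_of_mem μk hv)
  set W := {g : G // ℓ • g = 0 ∧ ∃ z, ℓ ^ k • z = g} with hW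
  let f : W → {d : Vbar // ℓ • d = 0} := fun w =>
    ⟨⟨q w.1, hqVbar w.1 w.2.2⟩, by
      ext
      show ℓ • q w.1 = 0
      rw [← map_nsmul q ℓ w.1, w.2.1, map_zero]⟩
  let rep : {d : Vbar // ℓ • d = 0} → G := fun d =>
    if h : ∃ w : W, f w = d then (h.choose.1 : G) else 0
  have hrep_tor : ∀ d, ℓ • rep d = 0 := by
    intro d
    by_cases h : ∃ w : W, f w = d
    · simp only [rep, dif_pos h]; exact h.choose.2.1
    · simp only [rep, dif_neg h, smul_zero]
  have hrep_q : ∀ w : W, q (rep (f w)) = q w.1 := by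
    intro w
    have h : ∃ w' : W, f w' = f w := ⟨w, rfl⟩
    simp only [rep, dif_pos h]
    have := h.choose_spec
    have := congrArg (fun d => (d.1 : G ⧸ U₂)) this
    exact this
  let Φ : W → {x : G // x ∈ U₂ ∧ ℓ • x = 0} × {d : Vbar // ℓ • d = 0} := fun w =>
    (⟨w.1 - rep (f w), by
        have hz : q (w.1 - rep (f w)) = 0 := by rw [map_sub, hrep_q w, sub_self]
        exact (QuotientAddGroup.eq_zero_iff _).mp hz
      , by rw [smul_sub, w.2.1, hrep_tor, sub_zero]⟩, f w)
  have hΦinj : Function.Injective Φ := by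
    intro w w' h
    have h2 : f w = f w' := congrArg Prod.snd h
    have h1 : w.1 - rep (f w) = w'.1 - rep (f w') :=
      congrArg (fun p => (p.1 : G)) h
    rw [h2] at h1
    exact Subtype.ext (sub_left_inj.mp h1)
  calc Nat.card W ≤ Nat.card ({x : G // x ∈ U₂ ∧ ℓ • x = 0} × {d : Vbar // ℓ • d = 0}) :=
        Nat.card_le_card_of_injective Φ hΦinj
    _ = Nat.card {x : G // x ∈ U₂ ∧ ℓ • x = 0} * Nat.card {d : Vbar // ℓ • d = 0} :=
        Nat.card_prod _ _
    _ ≤ Nat.card {x : G // x ∈ U₂ ∧ ℓ • x = 0} * ℓ ^ t :=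
        Nat.mul_le_mul_left _ htorbound
    _ = ℓ ^ t * Nat.card {x : G // x ∈ U₂ ∧ ℓ • x = 0} := Nat.mul_comm _ _

/-- per-coordinate upper bound. -/
lemma coord_upper (ℓ c k : ℕ) (hℓ : ℓ.Prime) :
    Nat.card {v : ZMod (ℓ ^ c) // ℓ • v = 0 ∧ ∃ w, ℓ ^ k • w = v} ≤
      if k < c then ℓ else 1 := by
  classical
  haveI : NeZero ℓ := ⟨hℓ.ne_zero⟩
  haveI : NeZero (ℓ ^ c) := ⟨pow_ne_zero c hℓ.ne_zero⟩
  by_cases hkc : k < c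
  · rw [if_pos hkc]
    have hc1 : 1 ≤ c := by omega
    -- injection into Fin ℓ via val / ℓ^(c-1)
    have hdvd : ∀ v : {v : ZMod (ℓ ^ c) // ℓ • v = 0 ∧ ∃ w, ℓ ^ k • w = v},
        ℓ ^ (c - 1) ∣ (v.1).val := by
      rintro ⟨v, hv, -⟩
      have h1 : ((ℓ * v.val : ℕ) : ZMod (ℓ ^ c)) = 0 := by
        push_cast
        rw [ZMod.natCast_zmod_val]
        rw [nsmul_eq_mul] at hv
        exact hv
      rw [ZMod.natCast_eq_zero_iff] at h1
      have h2 : ℓ * ℓ ^ (c - 1) ∣ ℓ * v.val := by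
        have he : ℓ ^ c = ℓ * ℓ ^ (c - 1) := by
          conv_lhs => rw [show c = 1 + (c - 1) by omega]
          rw [pow_add, pow_one]
        rw [← he]
        exact h1
      exact (mul_dvd_mul_iff_left (hℓ.pos.ne' : ℓ ≠ 0)).mp h2
    have hinj : Function.Injective
        (fun v : {v : ZMod (ℓ ^ c) // ℓ • v = 0 ∧ ∃ w, ℓ ^ k • w = v} =>
          (⟨v.1.val / ℓ ^ (c - 1), by
            have hlt : v.1.val < ℓ ^ c := ZMod.val_lt v.1
            have he : ℓ ^ c = ℓ * ℓ ^ (c - 1) := by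
              conv_lhs => rw [show c = 1 + (c - 1) by omega]
              rw [pow_add, pow_one]
            have hlt2 : v.1.val < ℓ * ℓ ^ (c - 1) := by rw [← he]; exact hlt
            exact Nat.div_lt_iff_lt_mul (pow_pos hℓ.pos _) |>.mpr hlt2⟩ : Fin ℓ)) := by
      intro v v' h
      have h1 : v.1.val / ℓ ^ (c - 1) = v'.1.val / ℓ ^ (c - 1) := congrArg Fin.val h
      have h2 : v.1.val = v'.1.val := by
        have d1 := hdvd v
        have d2 := hdvd v'
        calc v.1.val = ℓ ^ (c - 1) * (v.1.val / ℓ ^ (c - 1)) := (Nat.mul_div_cancel' d1).symm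
          _ = ℓ ^ (c - 1) * (v'.1.val / ℓ ^ (c - 1)) := by rw [h1]
          _ = v'.1.val := Nat.mul_div_cancel' d2
      exact Subtype.ext (ZMod.val_injective _ h2)
    calc Nat.card _ ≤ Nat.card (Fin ℓ) := Nat.card_le_card_of_injective _ hinj
      _ = ℓ := by simp
  · rw [if_neg hkc]
    have hall : ∀ v : {v : ZMod (ℓ ^ c) // ℓ • v = 0 ∧ ∃ w, ℓ ^ k • w = v}, v.1 = 0 := by
      rintro ⟨v, -, w, rfl⟩
      have hz : ((ℓ ^ k : ℕ) : ZMod (ℓ ^ c)) = 0 := by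
        rw [ZMod.natCast_eq_zero_iff]
        exact pow_dvd_pow ℓ (le_of_not_gt hkc)
      show ℓ ^ k • w = 0
      rw [nsmul_eq_mul, hz, zero_mul]
    haveI : Subsingleton {v : ZMod (ℓ ^ c) // ℓ • v = 0 ∧ ∃ w, ℓ ^ k • w = v} :=
      ⟨fun a b => Subtype.ext ((hall a).trans (hall b).symm)⟩
    haveI : Nonempty {v : ZMod (ℓ ^ c) // ℓ • v = 0 ∧ ∃ w, ℓ ^ k • w = v} :=
      ⟨⟨0, smul_zero _, 0, smul_zero _⟩⟩
    exact le_of_eq Nat.card_unique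

/-- H-side upper bound. -/
lemma Hside_upper (ℓ k : ℕ) (hℓ : ℓ.Prime) {H G : Type} [AddCommGroup H] [AddCommGroup G]
    [Finite H] [Finite G] (ι : H →+ G) (hι : Function.Injective ι)
    (s : ℕ) (n : Fin s → ℕ) (eH : H ≃+ Π i : Fin s, ZMod (ℓ ^ n i)) :
    Nat.card {x : G // x ∈ (ι.range).map (smulHom G (ℓ ^ k)) ∧ ℓ • x = 0} ≤
      ℓ ^ (Finset.univ.filter (fun i => k < n i)).card := by
  classical
  have hex : ∀ x : {x : G // x ∈ (ι.range).map (smulHom G (ℓ ^ k)) ∧ ℓ • x = 0},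
      ∃ h : H, ι (ℓ ^ k • h) = x.1 := by
    rintro ⟨x, hx, -⟩
    rw [AddSubgroup.mem_map] at hx
    obtain ⟨u, hu, rfl⟩ := hx
    obtain ⟨h, rfl⟩ := hu
    exact ⟨h, by rw [map_nsmul]; rfl⟩
  set S := {x : G // x ∈ (ι.range).map (smulHom G (ℓ ^ k)) ∧ ℓ • x = 0} with hS
  let hh : S → H := fun x => (hex x).choose
  have hhspec : ∀ x : S, ι (ℓ ^ k • hh x) = x.1 := fun x => (hex x).choose_spec
  let F : S → Π i : Fin s, {v : ZMod (ℓ ^ n i) // ℓ • v = 0 ∧ ∃ w, ℓ ^ k • w = v} :=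
    fun x => fun i => ⟨eH (ℓ ^ k • hh x) i, by
      have h0 : ℓ • (ℓ ^ k • hh x) = 0 := by
        apply hι
        rw [map_nsmul, hhspec x, x.2.2, map_zero]
      constructor
      · have : ℓ • (eH (ℓ ^ k • hh x)) = eH (ℓ • (ℓ ^ k • hh x)) := (map_nsmul eH ℓ _).symm
        calc ℓ • (eH (ℓ ^ k • hh x) i) = (ℓ • eH (ℓ ^ k • hh x)) i := rfl
          _ = 0 := by rw [this, h0, map_zero]; rfl
      · refine ⟨eH (hh x) i, ?_⟩
        calc ℓ ^ k • (eH (hh x) i) = (ℓ ^ k • eH (hh x)) i := rfl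
          _ = eH (ℓ ^ k • hh x) i := by rw [← map_nsmul]⟩
  have hFinj : Function.Injective F := by
    intro x x' h
    have h1 : ∀ i, eH (ℓ ^ k • hh x) i = eH (ℓ ^ k • hh x') i := fun i =>
      congrArg Subtype.val (congrFun h i)
    have h2 : eH (ℓ ^ k • hh x) = eH (ℓ ^ k • hh x') := funext h1
    have h3 : ℓ ^ k • hh x = ℓ ^ k • hh x' := eH.injective h2
    apply Subtype.ext
    rw [← hhspec x, ← hhspec x', h3]
  haveI : ∀ i : Fin s, NeZero (ℓ ^ n i) := fun i => ⟨pow_ne_zero _ hℓ.ne_zero⟩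
  calc Nat.card S ≤ Nat.card (Π i : Fin s, {v : ZMod (ℓ ^ n i) // ℓ • v = 0 ∧ ∃ w, ℓ ^ k • w = v}) :=
        Nat.card_le_card_of_injective F hFinj
    _ = ∏ i : Fin s, Nat.card {v : ZMod (ℓ ^ n i) // ℓ • v = 0 ∧ ∃ w, ℓ ^ k • w = v} :=
        Nat.card_pi
    _ ≤ ∏ i : Fin s, (if k < n i then ℓ else 1) :=
        Finset.prod_le_prod (fun i _ => Nat.zero_le _) (fun i _ => coord_upper ℓ (n i) k hℓ)
    _ = ℓ ^ (Finset.univ.filter (fun i => k < n i)).card := by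
        rw [Finset.prod_ite, Finset.prod_const, Finset.prod_const_one, mul_one]

/-- G-side lower bound. -/
lemma Gside_lower (ℓ k : ℕ) (hℓ : ℓ.Prime) {G : Type} [AddCommGroup G] [Finite G]
    (r : ℕ) (m : Fin r → ℕ) (eG : G ≃+ Π i : Fin r, ZMod (ℓ ^ m i)) :
    ℓ ^ (Finset.univ.filter (fun i => k < m i)).card ≤
      Nat.card {g : G // ℓ • g = 0 ∧ ∃ z, ℓ ^ k • z = g} := by
  classical
  haveI : NeZero ℓ := ⟨hℓ.ne_zero⟩
  haveI : ∀ i : Fin r, NeZero (ℓ ^ m i) := fun i => ⟨pow_ne_zero _ hℓ.ne_zero⟩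
  set xfun : ({i : Fin r // k < m i} → ZMod ℓ) → (Π i : Fin r, ZMod (ℓ ^ m i)) :=
    fun u => fun i => if h : k < m i then ((ℓ ^ (m i - 1) * (u ⟨i, h⟩).val : ℕ) : ZMod (ℓ ^ m i))
      else 0 with hxfun
  set zfun : ({i : Fin r // k < m i} → ZMod ℓ) → (Π i : Fin r, ZMod (ℓ ^ m i)) :=
    fun u => fun i => if h : k < m i then
      ((ℓ ^ (m i - 1 - k) * (u ⟨i, h⟩).val : ℕ) : ZMod (ℓ ^ m i)) else 0 with hzfun
  have castsmul : ∀ (N c q : ℕ), c • ((q : ℕ) : ZMod N) = ((c * q : ℕ) : ZMod N) := by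
    intro N c q
    rw [nsmul_eq_mul]
    push_cast
    ring
  have hx0 : ∀ u, ℓ • xfun u = 0 := by
    intro u
    funext i
    show ℓ • xfun u i = 0
    by_cases h : k < m i
    · simp only [hxfun, dif_pos h]
      rw [castsmul]
      rw [ZMod.natCast_eq_zero_iff]
      have he : ℓ * ℓ ^ (m i - 1) = ℓ ^ m i := by
        conv_rhs => rw [show m i = 1 + (m i - 1) by omega]
        rw [pow_add, pow_one]
      exact ⟨(u ⟨i, h⟩).val, by rw [← mul_assoc, he]⟩
    · simp only [hxfun, dif_neg h, smul_zero]
  have hzx : ∀ u, ℓ ^ k • zfun u = xfun u := by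
    intro u
    funext i
    show ℓ ^ k • zfun u i = xfun u i
    by_cases h : k < m i
    · simp only [hzfun, hxfun, dif_pos h]
      rw [castsmul]
      congr 1
      rw [← mul_assoc, ← pow_add]
      congr 2
      omega
    · simp only [hzfun, hxfun, dif_neg h, smul_zero]
  let Θ : ({i : Fin r // k < m i} → ZMod ℓ) → {g : G // ℓ • g = 0 ∧ ∃ z, ℓ ^ k • z = g} :=
    fun u => ⟨eG.symm (xfun u), by
      constructor
      · rw [← map_nsmul eG.symm ℓ (xfun u), hx0, map_zero]
      · exact ⟨eG.symm (zfun u), by rw [← map_nsmul eG.symm (ℓ ^ k) (zfun u), hzx]⟩⟩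
  have hΘinj : Function.Injective Θ := by
    intro u u' h
    have h1 : eG.symm (xfun u) = eG.symm (xfun u') := congrArg Subtype.val h
    have h2 : xfun u = xfun u' := eG.symm.injective h1
    funext j
    obtain ⟨i, hi⟩ := j
    have h3 := congrFun h2 i
    simp only [hxfun, dif_pos hi] at h3
    have hvlt : ∀ v : ZMod ℓ, ℓ ^ (m i - 1) * v.val < ℓ ^ m i := by
      intro v
      have : v.val < ℓ := ZMod.val_lt v
      calc ℓ ^ (m i - 1) * v.val < ℓ ^ (m i - 1) * ℓ :=
            (Nat.mul_lt_mul_left (pow_pos hℓ.pos _)).mpr this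
        _ = ℓ ^ m i := by rw [← pow_succ]; congr 1; omega
    have h4 := congrArg ZMod.val h3
    rw [ZMod.val_cast_of_lt (hvlt _), ZMod.val_cast_of_lt (hvlt _)] at h4
    have h5 : (u ⟨i, hi⟩).val = (u' ⟨i, hi⟩).val :=
      Nat.eq_of_mul_eq_mul_left (pow_pos hℓ.pos _) h4
    exact ZMod.val_injective _ h5
  calc ℓ ^ (Finset.univ.filter (fun i => k < m i)).card
      = Nat.card ({i : Fin r // k < m i} → ZMod ℓ) := by
        rw [Nat.card_pi, Finset.prod_const, Nat.card_zmod]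
        congr 1
        simp [Fintype.card_subtype]
    _ ≤ Nat.card {g : G // ℓ • g = 0 ∧ ∃ z, ℓ ^ k • z = g} :=
        Nat.card_le_card_of_injective Θ hΘinj

/-- Key lemma (first part): for a short exact sequence `0 → H → G → G' → 0` of finite
abelian `ℓ`-groups, with `G ≅ ⊕ ℤ/ℓ^{m_i}` (`m` increasing) and `H ≅ ⊕ ℤ/ℓ^{n_i}`
(`n` increasing), if `G'` is generated by `r - s` elements then `m_i ≤ n_i` for `i ≤ s`. -/
theorem key_lemma_first_part (ℓ : ℕ) (hℓ : ℓ.Prime)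
    (H G G' : Type) [AddCommGroup H] [AddCommGroup G] [AddCommGroup G']
    [Finite H] [Finite G] [Finite G']
    (ι : H →+ G) (π : G →+ G')
    (hι : Function.Injective ι) (hπ : Function.Surjective π)
    (hexact : ι.range = π.ker)
    (r s : ℕ) (hs : s ≤ r)
    (m : Fin r → ℕ) (n : Fin s → ℕ) (hm : Monotone m) (hn : Monotone n)
    (eG : G ≃+ Π i : Fin r, ZMod (ℓ ^ m i))
    (eH : H ≃+ Π i : Fin s, ZMod (ℓ ^ n i))
    (hgen : ∃ x : Fin (r - s) → G', AddSubgroup.closure (Set.range x) = ⊤) :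
    ∀ i : Fin s, m (Fin.castLE hs i) ≤ n i := by
  classical
  obtain ⟨x, hx⟩ := hgen
  set y : Fin (r - s) → G := fun j => Function.surjInv hπ (x j) with hy
  have hπy : ∀ j, π (y j) = x j := fun j => Function.surjInv_eq hπ (x j)
  have hUy : ι.range ⊔ AddSubgroup.closure (Set.range y) = ⊤ := by
    rw [eq_top_iff]
    intro g _
    have h1 : AddSubgroup.map π (AddSubgroup.closure (Set.range y)) = ⊤ := by
      rw [AddMonoidHom.map_closure, ← Set.range_comp]
      have : (π ∘ y) = x := funext hπy
      rw [this, hx]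
    have h2 : π g ∈ AddSubgroup.map π (AddSubgroup.closure (Set.range y)) := by
      rw [h1]; trivial
    rw [AddSubgroup.mem_map] at h2
    obtain ⟨v, hv, hveq⟩ := h2
    have h3 : g - v ∈ ι.range := by
      rw [hexact, AddMonoidHom.mem_ker, map_sub, hveq, sub_self]
    rw [← sub_add_cancel g v]
    exact AddSubgroup.add_mem_sup h3 hv
  -- the master counting inequality
  have master : ∀ k : ℕ,
      (Finset.univ.filter (fun i : Fin r => k < m i)).card ≤
        (r - s) + (Finset.univ.filter (fun i : Fin s => k < n i)).card := by
    intro k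
    have c1 := Gside_lower ℓ k hℓ r m eG
    have c2 := lemA G ℓ k (r - s) hℓ.pos ι.range y hUy
    have c3 := Hside_upper ℓ k hℓ ι hι s n eH
    have chain : ℓ ^ (Finset.univ.filter (fun i : Fin r => k < m i)).card ≤
        ℓ ^ ((r - s) + (Finset.univ.filter (fun i : Fin s => k < n i)).card) := by
      rw [pow_add]
      calc ℓ ^ (Finset.univ.filter (fun i : Fin r => k < m i)).card
          ≤ Nat.card {g : G // ℓ • g = 0 ∧ ∃ z, ℓ ^ k • z = g} := c1
        _ ≤ ℓ ^ (r - s) *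
            Nat.card {x : G // x ∈ (ι.range).map (smulHom G (ℓ ^ k)) ∧ ℓ • x = 0} := c2
        _ ≤ ℓ ^ (r - s) * ℓ ^ (Finset.univ.filter (fun i : Fin s => k < n i)).card :=
            Nat.mul_le_mul_left _ c3
    exact (Nat.pow_le_pow_iff_right hℓ.one_lt).mp chain
  -- combinatorial conclusion
  intro i
  by_contra hcon
  push_neg at hcon
  have key := master (n i)
  -- count on the m side
  have hA : (Finset.univ.filter (fun j : Fin r => ¬ n i < m j)).card ≤ i.val := by
    have hsub : ∀ j ∈ Finset.univ.filter (fun j : Fin r => ¬ n i < m j),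
        j.val ∈ Finset.range i.val := by
      intro j hj
      rw [Finset.mem_filter] at hj
      rw [Finset.mem_range]
      by_contra hge
      push_neg at hge
      have : Fin.castLE hs i ≤ j := by
        rw [Fin.le_def]
        simpa using hge
      exact hj.2 (lt_of_lt_of_le hcon (hm this))
    calc (Finset.univ.filter (fun j : Fin r => ¬ n i < m j)).card
        ≤ (Finset.range i.val).card :=
          Finset.card_le_card_of_injOn Fin.val hsub (fun a _ b _ h => Fin.val_injective h)
      _ = i.val := Finset.card_range _
  have hB : i.val + 1 ≤ (Finset.univ.filter (fun j : Fin s => ¬ n i < n j)).card := by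
    have hsub : Finset.Iic i ⊆ Finset.univ.filter (fun j : Fin s => ¬ n i < n j) := by
      intro j hj
      rw [Finset.mem_Iic] at hj
      rw [Finset.mem_filter]
      exact ⟨Finset.mem_univ _, not_lt.mpr (hn hj)⟩
    calc i.val + 1 = (Finset.Iic i).card := (Fin.card_Iic i).symm
      _ ≤ _ := Finset.card_le_card hsub
  have hcount_m : (Finset.univ.filter (fun j : Fin r => n i < m j)).card +
      (Finset.univ.filter (fun j : Fin r => ¬ n i < m j)).card = r := by
    have := Finset.card_filter_add_card_filter_not
      (s := (Finset.univ : Finset (Fin r))) (p := fun j => n i < m j)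
    simpa using this
  have hcount_n : (Finset.univ.filter (fun j : Fin s => n i < n j)).card +
      (Finset.univ.filter (fun j : Fin s => ¬ n i < n j)).card = s := by
    have := Finset.card_filter_add_card_filter_not
      (s := (Finset.univ : Finset (Fin s))) (p := fun j => n i < n j)
    simpa using this
  have his : i.val < s := i.isLt
  omega
end

section
/- Let 0 → H → G → G' → 0 be a short exact sequence of finite abelian ℓ-groups, with G ≅ ⊕_{i=1}^r ℤ/ℓ^{m_i}ℤ (0 ≤ m_1 ≤ … ≤ m_r), H generated by s elements, and G' ≅ ⊕_{i=1}^{r-s} ℤ/ℓ^{n'_i}ℤ (0 ≤ n'_1 ≤ … ≤ n'_{r-s}). Then m_i ≥ n'_{i-s} for all s+1 ≤ i ≤ r. -/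
open Finset

/-- In `ZMod (ℓ^(K+1))`, an element killed by `ℓ^K` is divisible by `ℓ`. -/
lemma zmod_div_of_smul_pow_eq_zero {ℓ K : ℕ} (hℓ : ℓ.Prime)
    (u : ZMod (ℓ ^ (K + 1))) (h : ℓ ^ K • u = 0) : ∃ v, u = ℓ • v := by
  haveI : NeZero (ℓ ^ (K + 1)) := ⟨pow_ne_zero _ hℓ.ne_zero⟩
  have h2 : ((ℓ ^ K * u.val : ℕ) : ZMod (ℓ ^ (K + 1))) = 0 := by
    push_cast
    rw [ZMod.natCast_val, ZMod.cast_id, ← h, nsmul_eq_mul]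
    push_cast
    ring
  rw [ZMod.natCast_eq_zero_iff] at h2
  obtain ⟨t, ht⟩ := h2
  have ht' : ℓ ^ K * u.val = ℓ ^ K * (ℓ * t) := by rw [ht, pow_succ]; ring
  have hval : u.val = ℓ * t :=
    Nat.eq_of_mul_eq_mul_left (Nat.pos_of_ne_zero (pow_ne_zero _ hℓ.ne_zero)) ht' 
  refine ⟨((t : ℕ) : ZMod (ℓ ^ (K + 1))), ?_⟩
  have hu : u = ((u.val : ℕ) : ZMod (ℓ ^ (K + 1))) := (ZMod.natCast_rightInverse u).symm
  rw [hu, hval, nsmul_eq_mul]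
  push_cast
  ring

/-- Nakayama-style lemma for groups of exponent dividing `ℓ^t`. -/
lemma nakayama_subgroup {C : Type*} [AddCommGroup C] (ℓ t : ℕ)
    (S : AddSubgroup C) (hexp : ∀ x : C, ℓ ^ t • x = 0)
    (hstep : ∀ x : C, ∃ y ∈ S, ∃ z : C, x = y + ℓ • z) :
    ∀ x : C, x ∈ S := by
  have key : ∀ u : ℕ, ∀ x : C, ∃ y ∈ S, ∃ z : C, x = y + ℓ ^ u • z := by
    intro u
    induction u with
    | zero => intro x; exact ⟨0, S.zero_mem, x, by simp⟩
    | succ u ih =>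
      intro x
      obtain ⟨y, hy, z, hz⟩ := ih x
      obtain ⟨y', hy', z', hz'⟩ := hstep z
      refine ⟨y + ℓ ^ u • y', S.add_mem hy (S.nsmul_mem hy' _), z', ?_⟩
      rw [hz, hz', smul_add, ← add_assoc, smul_smul, ← pow_succ]
  intro x
  obtain ⟨y, hy, z, hz⟩ := key t x
  rw [hexp z, add_zero] at hz
  rw [hz]
  exact hy

/-- Counting subtypes of `Fin N` defined by a lower bound on the value. -/
lemma card_fin_subtype_le (N c : ℕ) :
    Fintype.card {j : Fin N // c ≤ j.val} = N - c := by
  have e : {j : Fin N // c ≤ j.val} ≃ Fin (N - c) :=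
    { toFun := fun j => ⟨j.1.1 - c, by have h1 := j.1.2; have h2 := j.2; omega⟩
      invFun := fun k => ⟨⟨k.1 + c, by have := k.2; omega⟩, by
        show c ≤ k.1 + c; omega⟩
      left_inv := fun j => by
        apply Subtype.ext; apply Fin.ext
        show j.1.1 - c + c = j.1.1
        have := j.2; omega
      right_inv := fun k => by
        apply Fin.ext
        show k.1 + c - c = k.1
        omega }
  rw [Fintype.card_congr e, Fintype.card_fin]

/-- Core rank comparison: a surjection between explicit products of cyclic
`ℓ`-groups can only decrease the number of invariant factors exceeding `ℓ^K`. -/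
lemma core_rank_le (ℓ : ℕ) (hℓ : ℓ.Prime) (p q : ℕ) (m : Fin p → ℕ) (n : Fin q → ℕ)
    (φ : (Π j : Fin p, ZMod (ℓ ^ m j)) →+ (Π j : Fin q, ZMod (ℓ ^ n j)))
    (hφ : Function.Surjective φ) (K : ℕ) :
    Fintype.card {j : Fin q // K < n j} ≤ Fintype.card {j : Fin p // K < m j} := by
  haveI : NeZero (ℓ ^ (K + 1)) := ⟨pow_ne_zero _ hℓ.ne_zero⟩
  set R := ZMod (ℓ ^ (K + 1)) with hR
  -- the reduction map to the "rank `K` part"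
  let ρ : (Π j : Fin q, ZMod (ℓ ^ n j)) →+ ({j : Fin q // K < n j} → R) :=
    AddMonoidHom.mk' (fun y j => ZMod.castHom (pow_dvd_pow ℓ j.2) R (y j.1))
      (by intro y z; funext j; exact map_add _ _ _)
  have hρ : Function.Surjective ρ := by
    intro w
    refine ⟨fun j => if h : K < n j then (((w ⟨j, h⟩).val : ℕ) : ZMod (ℓ ^ n j)) else 0, ?_⟩
    funext j
    show ZMod.castHom (pow_dvd_pow ℓ j.2) R
      (if h : K < n j.1 then (((w ⟨j.1, h⟩).val : ℕ) : ZMod (ℓ ^ n j.1)) else 0) = w j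
    rw [dif_pos j.2, map_natCast]
    exact ZMod.natCast_rightInverse (w j)
  let Φ := ρ.comp φ
  have hΦ : Function.Surjective Φ := hρ.comp hφ
  set c : Fin p → ({j : Fin q // K < n j} → R) :=
    fun j => Φ (Pi.single j (1 : ZMod (ℓ ^ m j))) with hc
  have hterm : ∀ (j : Fin p) (u : ZMod (ℓ ^ m j)), Φ (Pi.single j u) = u.val • c j := by
    intro j u
    haveI : NeZero (ℓ ^ m j) := ⟨pow_ne_zero _ hℓ.ne_zero⟩
    have h1 : (Pi.single j u : Π j', ZMod (ℓ ^ m j')) =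
        u.val • (Pi.single j (1 : ZMod (ℓ ^ m j)) : Π j', ZMod (ℓ ^ m j')) := by
      rw [← Pi.single_smul, nsmul_eq_mul, mul_one,
        show ((u.val : ℕ) : ZMod (ℓ ^ m j)) = u from ZMod.natCast_rightInverse u]
    rw [h1, map_nsmul]
  have hdivisible : ∀ j : Fin p, m j ≤ K → ∃ d, c j = ℓ • d := by
    intro j hj
    have h1 : ℓ ^ m j • c j = 0 := by
      have e0 : (Pi.single j (ℓ ^ m j • (1 : ZMod (ℓ ^ m j))) : Π j', ZMod (ℓ ^ m j')) = 0 := by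
        have : ℓ ^ m j • (1 : ZMod (ℓ ^ m j)) = 0 := by
          rw [nsmul_eq_mul, mul_one, ZMod.natCast_self]
        rw [this, Pi.single_zero]
      calc ℓ ^ m j • c j
          = Φ (ℓ ^ m j • (Pi.single j (1 : ZMod (ℓ ^ m j)) : Π j', ZMod (ℓ ^ m j'))) :=
            (map_nsmul Φ _ _).symm
        _ = Φ (Pi.single j (ℓ ^ m j • (1 : ZMod (ℓ ^ m j)))) := by rw [Pi.single_smul]
        _ = 0 := by rw [e0, map_zero]
    have h2 : ℓ ^ K • c j = 0 := by
      have hKe : ℓ ^ K = ℓ ^ (K - m j) * ℓ ^ m j := by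
        rw [← pow_add]
        congr 1
        omega
      rw [hKe, ← smul_smul, h1, smul_zero]
    have h3 : ∀ j', ℓ ^ K • (c j j') = 0 := fun j' => congrFun h2 j'
    choose d hd using fun j' => zmod_div_of_smul_pow_eq_zero hℓ (c j j') (h3 j')
    exact ⟨d, funext hd⟩
  set S : AddSubgroup ({j : Fin q // K < n j} → R) :=
    AddSubgroup.closure (Set.range fun j : {j : Fin p // K < m j} => c j.1) with hS
  have hD : ∀ j : Fin p, ∃ d, ¬ K < m j → c j = ℓ • d := by
    intro j
    by_cases h : K < m j
    · exact ⟨0, fun h' => absurd h h'⟩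
    · obtain ⟨d, hd⟩ := hdivisible j (le_of_not_gt h)
      exact ⟨d, fun _ => hd⟩
  choose D hDspec using hD
  have hstep : ∀ w, ∃ y ∈ S, ∃ z, w = y + ℓ • z := by
    intro w
    obtain ⟨v, hv⟩ := hΦ w
    have hw : w = ∑ j : Fin p, (v j).val • c j := by
      rw [← hv]
      conv_lhs => rw [← Finset.univ_sum_single v]
      rw [map_sum]
      exact Finset.sum_congr rfl fun j _ => hterm j (v j)
    refine ⟨∑ j ∈ Finset.univ.filter (fun j => K < m j), (v j).val • c j, ?_,
      ∑ j ∈ Finset.univ.filter (fun j => ¬ K < m j), (v j).val • D j, ?_⟩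
    · apply AddSubgroup.sum_mem
      intro j hj
      have hj' : K < m j := (Finset.mem_filter.mp hj).2
      exact AddSubgroup.nsmul_mem S (AddSubgroup.subset_closure ⟨⟨j, hj'⟩, rfl⟩) _
    · rw [hw, ← Finset.sum_filter_add_sum_filter_not Finset.univ (fun j => K < m j)]
      congr 1
      rw [Finset.smul_sum]
      apply Finset.sum_congr rfl
      intro j hj
      have hj' : ¬ K < m j := (Finset.mem_filter.mp hj).2
      rw [hDspec j hj', smul_comm]
  have hexp : ∀ w : ({j : Fin q // K < n j} → R), ℓ ^ (K + 1) • w = 0 := by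
    intro w
    funext j'
    show ℓ ^ (K + 1) • w j' = 0
    rw [nsmul_eq_mul, ZMod.natCast_self]
    ring
  have htop : ∀ w, w ∈ S := nakayama_subgroup ℓ (K + 1) S hexp hstep
  -- the counting map
  let Ψ : ({j : Fin p // K < m j} → R) →+ ({j : Fin q // K < n j} → R) :=
    AddMonoidHom.mk' (fun z => ∑ j : {j : Fin p // K < m j}, z j • c j.1)
      (by
        intro a b
        rw [← Finset.sum_add_distrib]
        exact Finset.sum_congr rfl fun j _ => by rw [Pi.add_apply, add_smul])
  have hΨ : Function.Surjective Ψ := by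
    intro w
    have hle : S ≤ Ψ.range := by
      rw [hS, AddSubgroup.closure_le]
      rintro _ ⟨j, rfl⟩
      refine ⟨(Pi.single j (1 : R) : {j : Fin p // K < m j} → R), ?_⟩
      show ∑ j' : {j : Fin p // K < m j},
        (Pi.single j (1 : R) : {j : Fin p // K < m j} → R) j' • c j'.1 = c j.1
      rw [Finset.sum_eq_single j]
      · rw [Pi.single_eq_same, one_smul]
      · intro b _ hb
        rw [Pi.single_eq_of_ne hb, zero_smul]
      · intro hb
        exact absurd (Finset.mem_univ j) hb
    obtain ⟨z, hz⟩ := hle (htop w)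
    exact ⟨z, hz⟩
  have hcard := Nat.card_le_card_of_surjective Ψ hΨ
  rw [Nat.card_fun, Nat.card_fun, Nat.card_zmod, Nat.card_eq_fintype_card,
    Nat.card_eq_fintype_card] at hcard
  have hbase : 1 < ℓ ^ (K + 1) := by
    have h2 : 2 ≤ ℓ := hℓ.two_le
    calc 1 < ℓ := h2
    _ ≤ ℓ ^ (K + 1) := Nat.le_self_pow (by omega) ℓ
  exact (Nat.pow_le_pow_iff_right hbase).mp hcard

/-- Key lemma (dual part): for a short exact sequence `0 → H → G → G' → 0` of finite
abelian `ℓ`-groups, with `G ≅ ⊕ ℤ/ℓ^{m_i}` (`m` increasing), `H` generated by `s`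
elements, and `G' ≅ ⊕ ℤ/ℓ^{n'_i}` (`n'` increasing), one has `m_i ≥ n'_{i-s}` for
`s + 1 ≤ i ≤ r`. -/
theorem key_lemma_dual_part (ℓ : ℕ) (hℓ : ℓ.Prime)
    (H G G' : Type) [AddCommGroup H] [AddCommGroup G] [AddCommGroup G']
    [Finite H] [Finite G] [Finite G']
    (ι : H →+ G) (π : G →+ G')
    (hι : Function.Injective ι) (hπ : Function.Surjective π)
    (hexact : ι.range = π.ker)
    (r s : ℕ) (hs : s ≤ r)
    (m : Fin r → ℕ) (n' : Fin (r - s) → ℕ) (hm : Monotone m) (hn' : Monotone n')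
    (eG : G ≃+ Π i : Fin r, ZMod (ℓ ^ m i))
    (eG' : G' ≃+ Π i : Fin (r - s), ZMod (ℓ ^ n' i))
    (hgenH : ∃ x : Fin s → H, AddSubgroup.closure (Set.range x) = ⊤) :
    ∀ i : Fin (r - s), n' i ≤ m ⟨s + i, by omega⟩ := by
  intro i
  by_contra hcon
  push_neg at hcon
  set K : ℕ := m ⟨s + i, by omega⟩ with hK
  -- the composite surjection
  let φ : (Π j : Fin r, ZMod (ℓ ^ m j)) →+ (Π j : Fin (r - s), ZMod (ℓ ^ n' j)) :=
    (eG'.toAddMonoidHom.comp π).comp eG.symm.toAddMonoidHom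
  have hφ : Function.Surjective φ :=
    eG'.surjective.comp (hπ.comp eG.symm.surjective)
  have hcore := core_rank_le ℓ hℓ r (r - s) m n' φ hφ K
  -- lower bound for the target count
  have hb : r - s - i.val ≤ Fintype.card {j : Fin (r - s) // K < n' j} := by
    rw [← card_fin_subtype_le (r - s) i.val]
    apply Fintype.card_le_of_injective
      (fun j => (⟨j.1, lt_of_lt_of_le hcon (hn' (show i ≤ j.1 from j.2))⟩ :
        {j : Fin (r - s) // K < n' j}))
    intro a b hab
    simp only [Subtype.mk.injEq] at hab
    exact Subtype.ext hab
  -- upper bound for the source count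
  have ha : Fintype.card {j : Fin r // K < m j} ≤ r - (s + i.val + 1) := by
    rw [← card_fin_subtype_le r (s + i.val + 1)]
    apply Fintype.card_le_of_injective
      (fun j => (⟨j.1, by
        by_contra hle
        push_neg at hle
        have : j.1 ≤ (⟨s + i, by omega⟩ : Fin r) := by
          change j.1.val ≤ s + i.val; omega
        exact absurd (hm this) (not_le.mpr j.2)⟩ : {j : Fin r // s + i.val + 1 ≤ j.val}))
    intro a b hab
    simp only [Subtype.mk.injEq] at hab
    exact Subtype.ext hab
  have hi := i.isLt
  omega
end

section
/- Let T be a ℤ_ℓ[t]-module, free of rank r over ℤ_ℓ, and T_1 ⊆ T a t-stable submodule of ℤ_ℓ-rank s with T/T_1 torsion-free over ℤ_ℓ. Assume 1−t acts injectively on T ⊗ ℚ_ℓ. Let (m_1,…,m_r) be the increasingly ordered exponents of the finite abelian ℓ-group T/(1−t)T, and (n_1,…,n_s) those of T_1/(1−t)T_1. Then m_i ≤ n_i for 1 ≤ i ≤ s. -/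
open QuotientAddGroup

/-- The `k`-th multiplication map as an `AddMonoidHom`. -/
def hpSmul (G : Type*) [AddCommGroup G] (k : ℕ) : G →+ G :=
  AddMonoidHom.mk' (fun x => k • x) (fun a b => smul_add k a b)

@[simp] lemma hpSmul_apply {G : Type*} [AddCommGroup G] (k : ℕ) (x : G) :
    hpSmul G k x = k • x := rfl

/-- The subgroup `k•G`. -/
def hpSR (G : Type*) [AddCommGroup G] (k : ℕ) : AddSubgroup G := (hpSmul G k).range

lemma mem_hpSR {G : Type*} [AddCommGroup G] {k : ℕ} {x : G} :
    x ∈ hpSR G k ↔ ∃ y, k • y = x := Iff.rfl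

lemma hpSR_le {G : Type*} [AddCommGroup G] {a b : ℕ} (hab : a ∣ b) :
    hpSR G b ≤ hpSR G a := by
  obtain ⟨d, rfl⟩ := hab
  rintro x ⟨y, rfl⟩
  exact ⟨d • y, (mul_smul a d y).symm⟩

lemma hpCardQuot {T G : Type*} [AddCommGroup T] [AddCommGroup G] (π : T →+ G)
    (hπ : Function.Surjective π) (a b : ℕ) (hab : a ∣ b) :
    Nat.card (T ⧸ ((QuotientAddGroup.mk' (hpSR G b)).comp ((hpSmul G a).comp π)).ker)
      * Nat.card (hpSR G b) = Nat.card (hpSR G a) := by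
  set γ := (QuotientAddGroup.mk' (hpSR G b)).comp ((hpSmul G a).comp π) with hγ
  have hHle : hpSR G b ≤ hpSR G a := hpSR_le hab
  set ψ := (QuotientAddGroup.mk' (hpSR G b)).comp (hpSR G a).subtype with hψ
  have hrange : γ.range = ψ.range := by
    rw [hγ, hψ, AddMonoidHom.range_comp, AddMonoidHom.range_comp, AddMonoidHom.range_comp,
      AddMonoidHom.range_eq_top.mpr hπ, AddSubgroup.subtype_range]
    congr 1
    rw [← AddMonoidHom.range_eq_map]
    rfl
  have hker : ψ.ker = (hpSR G b).addSubgroupOf (hpSR G a) := by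
    rw [hψ, ← AddMonoidHom.comap_ker, QuotientAddGroup.ker_mk']
    rfl
  have e1 : Nat.card (T ⧸ γ.ker) = Nat.card γ.range :=
    Nat.card_congr (QuotientAddGroup.quotientKerEquivRange γ).toEquiv
  have e2 : Nat.card (hpSR G a) = Nat.card (↥(hpSR G a) ⧸ ψ.ker) * Nat.card ψ.ker :=
    AddSubgroup.card_eq_card_quotient_mul_card_addSubgroup ψ.ker
  have e3 : Nat.card (↥(hpSR G a) ⧸ ψ.ker) = Nat.card ψ.range :=
    Nat.card_congr (QuotientAddGroup.quotientKerEquivRange ψ).toEquiv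
  have e4 : Nat.card ψ.ker = Nat.card (hpSR G b) := by
    rw [hker]
    exact Nat.card_congr (AddSubgroup.addSubgroupOfEquivOfLe hHle).toEquiv
  rw [e1, hrange, e2, e3, e4]

lemma hpSR_map {G G' : Type*} [AddCommGroup G] [AddCommGroup G'] (e : G ≃+ G') (k : ℕ) :
    AddSubgroup.map (e : G →+ G') (hpSR G k) = hpSR G' k := by
  ext y
  simp only [AddSubgroup.mem_map, mem_hpSR]
  constructor
  · rintro ⟨x, ⟨z, rfl⟩, rfl⟩
    exact ⟨e z, by simp⟩
  · rintro ⟨w, rfl⟩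
    exact ⟨k • e.symm w, ⟨e.symm w, rfl⟩, by simp [map_nsmul]⟩

lemma hpSR_card_congr {G G' : Type*} [AddCommGroup G] [AddCommGroup G'] (e : G ≃+ G') (k : ℕ) :
    Nat.card (hpSR G k) = Nat.card (hpSR G' k) := by
  rw [← hpSR_map e k]
  exact Nat.card_congr (e.addSubgroupMap _).toEquiv

lemma hpSR_card_pi {ι : Type*} [Fintype ι] (A : ι → Type*) [∀ i, AddCommGroup (A i)] (k : ℕ) :
    Nat.card (hpSR (Π i, A i) k) = ∏ i, Nat.card (hpSR (A i) k) := by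
  have e : ↥(hpSR (Π i, A i) k) ≃ Π i, ↥(hpSR (A i) k) :=
    { toFun := fun x i => ⟨x.1 i, by obtain ⟨y, hy⟩ := x.2; exact ⟨y i, congrFun hy i⟩⟩
      invFun := fun f => ⟨fun i => (f i).1, by
        choose y hy using fun i => (f i).2
        exact ⟨y, funext hy⟩⟩
      left_inv := fun x => rfl
      right_inv := fun f => rfl }
  rw [Nat.card_congr e, Nat.card_pi]

lemma hpSR_card_zmod (p : ℕ) (hp : p.Prime) (mm c : ℕ) :
    Nat.card (hpSR (ZMod (p ^ mm)) (p ^ c)) = p ^ (mm - min mm c) := by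
  have hne : (p : ℕ) ^ mm ≠ 0 := pow_ne_zero _ hp.pos.ne'
  haveI : NeZero (p ^ mm) := ⟨hne⟩
  have h1 : hpSR (ZMod (p ^ mm)) (p ^ c)
      = AddSubgroup.zmultiples ((p ^ c : ℕ) : ZMod (p ^ mm)) := by
    ext x
    constructor
    · rintro ⟨y, rfl⟩
      show (p^c : ℕ) • y ∈ _
      have : (p^c : ℕ) • y = y.val • ((p ^ c : ℕ) : ZMod (p ^ mm)) := by
        rw [nsmul_eq_mul, nsmul_eq_mul, ZMod.natCast_val, ZMod.cast_id, mul_comm]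
      rw [this]
      exact AddSubgroup.nsmul_mem _ (AddSubgroup.mem_zmultiples _) _
    · intro hx
      obtain ⟨z, rfl⟩ := AddSubgroup.mem_zmultiples_iff.mp hx
      refine ⟨((z : ℤ) : ZMod (p ^ mm)), ?_⟩
      simp only [hpSmul_apply]
      rw [nsmul_eq_mul, zsmul_eq_mul]
      push_cast
      ring
  rw [h1, Nat.card_zmultiples, ZMod.addOrderOf_coe _ hne]
  have hgcd : (p ^ mm).gcd (p ^ c) = p ^ (min mm c) := by
    rcases le_total mm c with h | h
    · rw [min_eq_left h, Nat.gcd_eq_left (pow_dvd_pow _ h)]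
    · rw [min_eq_right h, Nat.gcd_eq_right (pow_dvd_pow _ h)]
  rw [hgcd, ← Nat.pow_div (min_le_left _ _) hp.pos]

lemma hp_card_quot_sR (p : ℕ) [Fact p.Prime] (M : Type*) [AddCommGroup M] [Module ℤ_[p] M]
    [Module.Free ℤ_[p] M] [Module.Finite ℤ_[p] M] :
    Nat.card (M ⧸ hpSR M p) = p ^ (Module.finrank ℤ_[p] M) := by
  set d := Module.finrank ℤ_[p] M
  let e : M ≃ₗ[ℤ_[p]] (Fin d → ℤ_[p]) := (Module.finBasis ℤ_[p] M).equivFun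
  let Ψ : (Fin d → ℤ_[p]) →+ (Fin d → ZMod p) :=
    AddMonoidHom.mk' (fun x i => PadicInt.toZMod (x i))
      (by intro a b; funext i; simp)
  let Φ : M →+ (Fin d → ZMod p) := Ψ.comp e.toLinearMap.toAddMonoidHom
  have hp0 : PadicInt.toZMod ((p : ℤ_[p])) = 0 := by
    have : (p : ℤ_[p]) ∈ RingHom.ker (PadicInt.toZMod (p := p)) := by
      rw [PadicInt.ker_toZMod, PadicInt.maximalIdeal_eq_span_p]
      exact Ideal.subset_span rfl
    exact this
  have hΦsurj : Function.Surjective Φ := by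
    intro z
    refine ⟨e.symm (fun i => ((z i).val : ℤ_[p])), ?_⟩
    show Ψ (e (e.symm _)) = z
    rw [e.apply_symm_apply]
    funext i
    show PadicInt.toZMod (((z i).val : ℤ_[p])) = z i
    rw [map_natCast, ZMod.natCast_val, ZMod.cast_id]
  have hker : Φ.ker = hpSR M p := by
    ext x
    constructor
    · intro hx
      have hx' : ∀ i, PadicInt.toZMod (e x i) = 0 := by
        intro i
        have : Φ x = 0 := hx
        exact congrFun this i
      have hdvd : ∀ i, ∃ w, e x i = (p : ℤ_[p]) * w := by
        intro i
        have : e x i ∈ RingHom.ker (PadicInt.toZMod (p := p)) := hx' i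
        rw [PadicInt.ker_toZMod, PadicInt.maximalIdeal_eq_span_p,
          Ideal.mem_span_singleton] at this
        obtain ⟨w, hw⟩ := this
        exact ⟨w, hw⟩
      choose w hw using hdvd
      refine ⟨e.symm w, ?_⟩
      show (p : ℕ) • (e.symm w) = x
      rw [← Nat.cast_smul_eq_nsmul ℤ_[p], ← map_smul]
      rw [show (p : ℤ_[p]) • w = e x from ?_]
      · exact e.symm_apply_apply x
      · funext i
        rw [Pi.smul_apply, smul_eq_mul, ← hw]
    · rintro ⟨y, rfl⟩
      show Ψ (e ((p:ℕ) • y)) = 0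
      rw [← Nat.cast_smul_eq_nsmul ℤ_[p], map_smul]
      funext i
      show PadicInt.toZMod (((p : ℤ_[p]) • e y) i) = 0
      rw [Pi.smul_apply, smul_eq_mul, map_mul, hp0, zero_mul]
  have := Nat.card_congr (QuotientAddGroup.quotientKerEquivOfSurjective Φ hΦsurj).toEquiv
  rw [hker] at this
  rw [this, Nat.card_pi]
  simp [Nat.card_zmod]

lemma hp_tower {T : Type*} [AddCommGroup T] (L U : AddSubgroup T) (h : L ≤ U) :
    Nat.card (T ⧸ L) =
      Nat.card (T ⧸ U) * Nat.card (AddSubgroup.map (QuotientAddGroup.mk' L) U) := by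
  have e := QuotientAddGroup.quotientQuotientEquivQuotient L U h
  rw [AddSubgroup.card_eq_card_quotient_mul_card_addSubgroup
    (AddSubgroup.map (QuotientAddGroup.mk' L) U), Nat.card_congr e.toEquiv]

/-- Theorem (first part): `T` a `ℤ_ℓ[t]`-module free of rank `r` over `ℤ_ℓ` (with `φ`
the action of `t`), `T₁ ⊆ T` a `t`-stable submodule of rank `s` with `T/T₁`
torsion-free, `1 - t` injective.  If `(m_1,…,m_r)` and `(n_1,…,n_s)` are the increasingly
ordered exponents of `T/(1-t)T` and `T₁/(1-t)T₁`, then `m_i ≤ n_i` for `1 ≤ i ≤ s`. -/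
theorem hodge_polygon_of_submodule (ℓ : ℕ) [Fact ℓ.Prime]
    (T : Type) [AddCommGroup T] [Module ℤ_[ℓ] T] [Module.Free ℤ_[ℓ] T]
    [Module.Finite ℤ_[ℓ] T]
    (r s : ℕ) (hs : s ≤ r) (hr : Module.finrank ℤ_[ℓ] T = r)
    (φ E : T →ₗ[ℤ_[ℓ]] T) (hEdef : E = LinearMap.id - φ)
    (hE : Function.Injective E)
    (T₁ : Submodule ℤ_[ℓ] T) (hstab : ∀ x ∈ T₁, φ x ∈ T₁)
    (hrank₁ : Module.finrank ℤ_[ℓ] T₁ = s)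
    (htf : NoZeroSMulDivisors ℤ_[ℓ] (T ⧸ T₁))
    (hstabE : T₁ ≤ T₁.comap E)
    (m : Fin r → ℕ) (n : Fin s → ℕ) (hm : Monotone m) (hn : Monotone n)
    (em : (T ⧸ LinearMap.range E) ≃+ Π i : Fin r, ZMod (ℓ ^ m i))
    (en : (T₁ ⧸ Submodule.comap T₁.subtype (Submodule.map E T₁)) ≃+
      Π i : Fin s, ZMod (ℓ ^ n i)) :
    ∀ i : Fin s, m (Fin.castLE hs i) ≤ n i := by
  have hp : ℓ.Prime := Fact.out
  have hℓ1 : 1 < ℓ := hp.one_lt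
  haveI : IsNoetherian ℤ_[ℓ] T := isNoetherian_of_isNoetherianRing_of_finite ℤ_[ℓ] T
  haveI : Module.Free ℤ_[ℓ] T₁ := Module.free_of_finite_type_torsion_free'
  set R : Submodule ℤ_[ℓ] T := LinearMap.range E with hR
  set R₁ : Submodule ℤ_[ℓ] T₁ := Submodule.comap T₁.subtype (Submodule.map E T₁) with hR₁
  set a : ℕ → ℕ := fun c => (Finset.univ.filter fun j : Fin r => c < m j).card with ha
  set b : ℕ → ℕ := fun c => (Finset.univ.filter fun j : Fin s => c < n j).card with hb
  -- cardinalities of `ℓ^k • (T ⧸ (1-t)T)`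
  have hQG : ∀ k : ℕ, Nat.card (hpSR (T ⧸ R) (ℓ ^ k)) = ℓ ^ (∑ j, (m j - min (m j) k)) := by
    intro k
    rw [hpSR_card_congr em, hpSR_card_pi,
      Finset.prod_congr rfl (fun j _ => hpSR_card_zmod ℓ hp (m j) k),
      Finset.prod_pow_eq_pow_sum]
  have hQG₁ : ∀ k : ℕ, Nat.card (hpSR (T₁ ⧸ R₁) (ℓ ^ k)) = ℓ ^ (∑ j, (n j - min (n j) k)) := by
    intro k
    rw [hpSR_card_congr en, hpSR_card_pi,
      Finset.prod_congr rfl (fun j _ => hpSR_card_zmod ℓ hp (n j) k),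
      Finset.prod_pow_eq_pow_sum]
  have hA : ∀ c : ℕ, (∑ j, (m j - min (m j) c)) = a c + (∑ j, (m j - min (m j) (c + 1))) := by
    intro c
    rw [ha]
    calc (∑ j, (m j - min (m j) c))
        = ∑ j, ((if c < m j then 1 else 0) + (m j - min (m j) (c + 1))) :=
          Finset.sum_congr rfl fun j _ => by split_ifs <;> omega
      _ = _ := by rw [Finset.sum_add_distrib, ← Finset.card_filter]
  have hB : ∀ c : ℕ, (∑ j, (n j - min (n j) c)) = b c + (∑ j, (n j - min (n j) (c + 1))) := by
    intro c
    rw [hb]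
    calc (∑ j, (n j - min (n j) c))
        = ∑ j, ((if c < n j then 1 else 0) + (n j - min (n j) (c + 1))) :=
          Finset.sum_congr rfl fun j _ => by split_ifs <;> omega
      _ = _ := by rw [Finset.sum_add_distrib, ← Finset.card_filter]
  have KEY : ∀ c : ℕ, a c + s ≤ b c + r := by
    intro c
    set πT : T →+ (T ⧸ R) := R.mkQ.toAddMonoidHom with hπT
    set πT₁ : T₁ →+ (T₁ ⧸ R₁) := R₁.mkQ.toAddMonoidHom with hπT₁
    have hπTs : Function.Surjective πT := R.mkQ_surjective
    have hπT₁s : Function.Surjective πT₁ := R₁.mkQ_surjective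
    set γ : T →+ ((T ⧸ R) ⧸ hpSR (T ⧸ R) (ℓ ^ (c + 1))) :=
      (QuotientAddGroup.mk' (hpSR (T ⧸ R) (ℓ ^ (c + 1)))).comp
        ((hpSmul (T ⧸ R) (ℓ ^ c)).comp πT) with hγ
    set γ₁ : T₁ →+ ((T₁ ⧸ R₁) ⧸ hpSR (T₁ ⧸ R₁) (ℓ ^ (c + 1))) :=
      (QuotientAddGroup.mk' (hpSR (T₁ ⧸ R₁) (ℓ ^ (c + 1)))).comp
        ((hpSmul (T₁ ⧸ R₁) (ℓ ^ c)).comp πT₁) with hγ₁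
    set U : AddSubgroup T := γ.ker with hU
    set U₁ : AddSubgroup T₁ := γ₁.ker with hU₁
    have hdvd : (ℓ : ℕ) ^ c ∣ ℓ ^ (c + 1) := pow_dvd_pow ℓ (Nat.le_succ c)
    have hposA : 0 < ℓ ^ (∑ j, (m j - min (m j) (c + 1))) := pow_pos hp.pos _
    have hposB : 0 < ℓ ^ (∑ j, (n j - min (n j) (c + 1))) := pow_pos hp.pos _
    have F1 : Nat.card (T ⧸ U) * ℓ ^ (∑ j, (m j - min (m j) (c + 1)))
        = ℓ ^ (∑ j, (m j - min (m j) c)) := by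
      rw [← hQG (c + 1), ← hQG c]
      exact hpCardQuot πT hπTs (ℓ ^ c) (ℓ ^ (c + 1)) hdvd
    have F2 : Nat.card (T₁ ⧸ U₁) * ℓ ^ (∑ j, (n j - min (n j) (c + 1)))
        = ℓ ^ (∑ j, (n j - min (n j) c)) := by
      rw [← hQG₁ (c + 1), ← hQG₁ c]
      exact hpCardQuot πT₁ hπT₁s (ℓ ^ c) (ℓ ^ (c + 1)) hdvd
    have hX : Nat.card (T ⧸ U) = ℓ ^ a c := by
      rw [hA c, pow_add] at F1
      exact Nat.eq_of_mul_eq_mul_right hposA F1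
    have hY : Nat.card (T₁ ⧸ U₁) = ℓ ^ b c := by
      rw [hB c, pow_add] at F2
      exact Nat.eq_of_mul_eq_mul_right hposB F2
    -- the subgroups ℓT, ℓT₁
    set L : AddSubgroup T := hpSR T ℓ with hL
    set L₁ : AddSubgroup T₁ := hpSR T₁ ℓ with hL₁
    have hLU : L ≤ U := by
      rintro x ⟨y, rfl⟩
      show QuotientAddGroup.mk' _ (hpSmul _ (ℓ ^ c) (πT (hpSmul T ℓ y))) = 0
      rw [QuotientAddGroup.mk'_apply, QuotientAddGroup.eq_zero_iff, hpSmul_apply, hpSmul_apply,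
        map_nsmul]
      exact ⟨πT y, by rw [hpSmul_apply, pow_succ, mul_smul]⟩
    have hL₁U₁ : L₁ ≤ U₁ := by
      rintro x ⟨y, rfl⟩
      show QuotientAddGroup.mk' _ (hpSmul _ (ℓ ^ c) (πT₁ (hpSmul (↥T₁) ℓ y))) = 0
      rw [QuotientAddGroup.mk'_apply, QuotientAddGroup.eq_zero_iff, hpSmul_apply, hpSmul_apply,
        map_nsmul]
      exact ⟨πT₁ y, by rw [hpSmul_apply, pow_succ, mul_smul]⟩
    have cardT : Nat.card (T ⧸ L) = ℓ ^ r := by rw [hL, hp_card_quot_sR ℓ T, hr]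
    have cardT₁ : Nat.card (T₁ ⧸ L₁) = ℓ ^ s := by rw [hL₁, hp_card_quot_sR ℓ T₁, hrank₁]
    have tower := hp_tower L U hLU
    have tower₁ := hp_tower L₁ U₁ hL₁U₁
    -- the inclusion map on quotients mod ℓ
    set ι : T₁ →+ T := T₁.subtype.toAddMonoidHom with hι
    have hcomp : L₁ ≤ AddSubgroup.comap ι L := by
      rintro x ⟨y, rfl⟩
      exact ⟨(y : T), by simp [hι]⟩
    set j : (T₁ ⧸ L₁) →+ (T ⧸ L) := QuotientAddGroup.map L₁ L ι hcomp with hj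
    have hjinj : Function.Injective j := by
      rw [injective_iff_map_eq_zero]
      intro q hq
      induction q using QuotientAddGroup.induction_on with
      | H z =>
        rw [hj, QuotientAddGroup.map_mk, QuotientAddGroup.eq_zero_iff] at hq
        obtain ⟨w, hw⟩ := hq
        rw [hpSmul_apply] at hw
        have hwT₁ : w ∈ T₁ := by
          have h0 : (ℓ : ℤ_[ℓ]) • (Submodule.Quotient.mk w : T ⧸ T₁) = 0 := by
            rw [← Submodule.Quotient.mk_smul, Nat.cast_smul_eq_nsmul, hw,
              Submodule.Quotient.mk_eq_zero]
            exact z.2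
          rcases smul_eq_zero.mp h0 with h | h
          · exact absurd h (Nat.cast_ne_zero.mpr hp.pos.ne')
          · exact (Submodule.Quotient.mk_eq_zero T₁).mp h
        rw [QuotientAddGroup.eq_zero_iff]
        refine ⟨⟨w, hwT₁⟩, ?_⟩
        rw [hpSmul_apply]
        exact Subtype.ext (by simpa [hι] using hw)
    -- U₁ maps into U
    have hUsub : ∀ y : T₁, y ∈ U₁ → (ι y) ∈ U := by
      intro y hy
      have hy' : QuotientAddGroup.mk' _ (hpSmul _ (ℓ ^ c) (πT₁ y)) = 0 := hy
      rw [QuotientAddGroup.mk'_apply, QuotientAddGroup.eq_zero_iff, hpSmul_apply] at hy'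
      obtain ⟨g, hg⟩ := hy'
      rw [hpSmul_apply] at hg
      obtain ⟨w, rfl⟩ := hπT₁s g
      have hmem : ((ℓ ^ c : ℕ) • y - (ℓ ^ (c + 1) : ℕ) • w) ∈ R₁ := by
        have : πT₁ ((ℓ ^ c : ℕ) • y - (ℓ ^ (c + 1) : ℕ) • w) = 0 := by
          rw [map_sub, map_nsmul, map_nsmul, hg, sub_self]
        rwa [hπT₁, LinearMap.toAddMonoidHom_coe, Submodule.mkQ_apply,
          Submodule.Quotient.mk_eq_zero] at this
      rw [hR₁, Submodule.mem_comap] at hmem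
      obtain ⟨u, hu, huE⟩ := Submodule.mem_map.mp hmem
      show QuotientAddGroup.mk' _ (hpSmul _ (ℓ ^ c) (πT (ι y))) = 0
      rw [QuotientAddGroup.mk'_apply, QuotientAddGroup.eq_zero_iff, hpSmul_apply]
      refine ⟨πT (ι w), ?_⟩
      rw [hpSmul_apply, ← map_nsmul, ← map_nsmul]
      have : πT ((ℓ ^ c : ℕ) • (ι y) - (ℓ ^ (c + 1) : ℕ) • (ι w)) = 0 := by
        rw [hπT, LinearMap.toAddMonoidHom_coe, Submodule.mkQ_apply,
          Submodule.Quotient.mk_eq_zero, hR]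
        refine ⟨u, ?_⟩
        rw [huE]
        simp [hι]
      rw [map_sub, sub_eq_zero] at this
      exact this.symm
    -- compare orders of the images mod ℓ
    haveI : Finite (T ⧸ L) := Nat.finite_of_card_ne_zero (by rw [cardT]; positivity)
    have hVV : Nat.card (AddSubgroup.map (QuotientAddGroup.mk' L₁) U₁)
        ≤ Nat.card (AddSubgroup.map (QuotientAddGroup.mk' L) U) := by
      have hf : ∀ v : (AddSubgroup.map (QuotientAddGroup.mk' L₁) U₁),
          j v.1 ∈ AddSubgroup.map (QuotientAddGroup.mk' L) U := by
        rintro ⟨v, x, hx, rfl⟩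
        refine ⟨ι x, hUsub x hx, ?_⟩
        rw [hj]
        simp [QuotientAddGroup.map_mk]
      exact Nat.card_le_card_of_injective
        (fun v => (⟨j v.1, hf v⟩ : AddSubgroup.map (QuotientAddGroup.mk' L) U))
        (fun v w hvw => Subtype.ext (hjinj (Subtype.ext_iff.mp hvw)))
    -- put everything together
    have main : Nat.card (T ⧸ U) * ℓ ^ s ≤ Nat.card (T₁ ⧸ U₁) * ℓ ^ r := by
      calc Nat.card (T ⧸ U) * ℓ ^ s
          = Nat.card (T ⧸ U) * (Nat.card (T₁ ⧸ U₁)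
              * Nat.card (AddSubgroup.map (QuotientAddGroup.mk' L₁) U₁)) := by
            rw [← cardT₁, tower₁]
        _ ≤ Nat.card (T ⧸ U) * (Nat.card (T₁ ⧸ U₁)
              * Nat.card (AddSubgroup.map (QuotientAddGroup.mk' L) U)) := by
            exact Nat.mul_le_mul_left _ (Nat.mul_le_mul_left _ hVV)
        _ = Nat.card (T₁ ⧸ U₁) * (Nat.card (T ⧸ U)
              * Nat.card (AddSubgroup.map (QuotientAddGroup.mk' L) U)) := by ring
        _ = Nat.card (T₁ ⧸ U₁) * ℓ ^ r := by rw [← tower, cardT]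
    rw [hX, hY, ← pow_add, ← pow_add] at main
    exact (Nat.pow_le_pow_iff_right hℓ1).mp main
  -- final combinatorial step
  intro i
  by_contra hcon
  push_neg at hcon
  have h1 : Finset.Ici (Fin.castLE hs i) ⊆
      (Finset.univ.filter fun j : Fin r => n i < m j) := by
    intro j hj
    rw [Finset.mem_filter]
    exact ⟨Finset.mem_univ _, lt_of_lt_of_le hcon (hm (Finset.mem_Ici.mp hj))⟩
  have h2 : (Finset.univ.filter fun j : Fin s => n i < n j) ⊆ Finset.Ioi i := by
    intro j hj
    rw [Finset.mem_filter] at hj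
    rw [Finset.mem_Ioi]
    by_contra hji
    exact absurd (hn (not_lt.mp hji)) (not_le.mpr hj.2)
  have c1 : r - (i : ℕ) ≤ a (n i) := by
    rw [ha]
    calc r - (i : ℕ) = (Finset.Ici (Fin.castLE hs i)).card := by
          rw [Fin.card_Ici]; simp
      _ ≤ _ := Finset.card_le_card h1
  have c2 : b (n i) ≤ s - 1 - (i : ℕ) := by
    rw [hb]
    calc (Finset.univ.filter fun j : Fin s => n i < n j).card
        ≤ (Finset.Ioi i).card := Finset.card_le_card h2
      _ = s - 1 - (i : ℕ) := Fin.card_Ioi i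
  have := KEY (n i)
  have his : (i : ℕ) < s := i.isLt
  omega
end

section
/- Let T be a ℤ_ℓ[t]-module, free of rank r over ℤ_ℓ, T_1 ⊆ T a t-stable submodule with T_2 = T/T_1 torsion-free over ℤ_ℓ of rank r − s. Assume 1−t is injective on T ⊗ ℚ_ℓ. Let (m_1,…,m_r) be the ordered exponents of T/(1−t)T and (n'_1,…,n'_{r−s}) those of T_2/(1−t)T_2. Then m_i ≥ n'_{i−s} for s+1 ≤ i ≤ r. -/
open Function

section aux

variable {ℓ : ℕ} [hp : Fact ℓ.Prime]

lemma aux_neZero (c : ℕ) : NeZero (ℓ ^ c) := ⟨pow_ne_zero _ hp.out.ne_zero⟩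

lemma aux_small {c k : ℕ} (hck : c ≤ k) (z : ZMod (ℓ ^ c)) : (ℓ ^ k) • z = 0 := by
  have h1 : ((ℓ ^ k : ℕ) : ZMod (ℓ ^ c)) = 0 :=
    (ZMod.natCast_eq_zero_iff _ _).mpr (pow_dvd_pow ℓ hck)
  rw [nsmul_eq_mul, h1, zero_mul]

lemma aux_red_zero {c k : ℕ} (hkc : k < c) (z : ZMod (ℓ ^ c))
    (hz : (ℓ ^ k) • z = 0) : ((z.val : ℕ) : ZMod ℓ) = 0 := by
  haveI := aux_neZero (ℓ := ℓ) c
  have hz' : ((ℓ ^ k * z.val : ℕ) : ZMod (ℓ ^ c)) = 0 := by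
    push_cast
    rw [ZMod.natCast_val, ZMod.cast_id]
    rw [nsmul_eq_mul] at hz
    exact_mod_cast hz
  have hdvd : ℓ ^ c ∣ ℓ ^ k * z.val := (ZMod.natCast_eq_zero_iff _ _).mp hz'
  have h2 : ℓ ^ k * ℓ ∣ ℓ ^ k * z.val := dvd_trans (by rw [← pow_succ]; exact pow_dvd_pow ℓ hkc) hdvd
  have h3 : ℓ ∣ z.val := (mul_dvd_mul_iff_left (pow_ne_zero k hp.out.ne_zero)).mp h2
  exact (ZMod.natCast_eq_zero_iff _ _).mpr h3

def aux_Phi {ι : Type} (c : ι → ℕ) (k : ℕ) :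
    ((i : ι) → ZMod (ℓ ^ c i)) →+ ({i // k + 1 ≤ c i} → ZMod ℓ) where
  toFun x j := ZMod.castHom (dvd_pow_self ℓ (by have := j.2; omega : c j.1 ≠ 0)) (ZMod ℓ) (x j.1)
  map_zero' := funext fun j =>
    map_zero (ZMod.castHom (dvd_pow_self ℓ (by have := j.2; omega : c j.1 ≠ 0)) (ZMod ℓ))
  map_add' x y := funext fun j =>
    map_add (ZMod.castHom (dvd_pow_self ℓ (by have := j.2; omega : c j.1 ≠ 0)) (ZMod ℓ)) _ _

lemma aux_Phi_surj {ι : Type} (c : ι → ℕ) (k : ℕ) [∀ i, NeZero (ℓ ^ c i)] :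
    Surjective (aux_Phi (ℓ := ℓ) c k) := by
  haveI : NeZero ℓ := ⟨hp.out.ne_zero⟩
  intro y
  refine ⟨fun i => if h : k + 1 ≤ c i then ((y ⟨i, h⟩).val : ZMod (ℓ ^ c i)) else 0, ?_⟩
  funext j
  simp only [aux_Phi, AddMonoidHom.coe_mk, ZeroHom.coe_mk]
  rw [dif_pos j.2, map_natCast]
  exact ZMod.natCast_rightInverse (y j)

lemma aux_ker_sub {ι : Type} (c : ι → ℕ) (k : ℕ) (x : (i : ι) → ZMod (ℓ ^ c i))
    (hx : aux_Phi (ℓ := ℓ) c k x = 0) :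
    ∃ w, (ℓ ^ k) • x = (ℓ ^ (k + 1)) • w := by
  refine ⟨fun i => if h : k + 1 ≤ c i then (((x i).val / ℓ : ℕ) : ZMod (ℓ ^ c i)) else 0, ?_⟩
  funext i
  simp only [Pi.smul_apply]
  by_cases h : k + 1 ≤ c i
  · haveI := aux_neZero (ℓ := ℓ) (c i)
    have hxi := congrFun hx ⟨i, h⟩
    simp only [aux_Phi, AddMonoidHom.coe_mk, ZeroHom.coe_mk, Pi.zero_apply,
      ZMod.castHom_apply, ← ZMod.natCast_val] at hxi
    have hdvd : ℓ ∣ (x i).val := (ZMod.natCast_eq_zero_iff _ _).mp hxi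
    have hx_eq : x i = ((ℓ * ((x i).val / ℓ) : ℕ) : ZMod (ℓ ^ c i)) := by
      rw [Nat.mul_div_cancel' hdvd]
      exact (ZMod.natCast_rightInverse (x i)).symm
    rw [dif_pos h]
    conv_lhs => rw [hx_eq]
    rw [nsmul_eq_mul, nsmul_eq_mul]
    push_cast
    ring
  · rw [aux_small (by omega), dif_neg h, smul_zero]

lemma aux_ker_to_zero {ι : Type} (c : ι → ℕ) (k : ℕ) (y u : (i : ι) → ZMod (ℓ ^ c i))
    (hy : (ℓ ^ k) • y = (ℓ ^ (k + 1)) • u) : aux_Phi (ℓ := ℓ) c k y = 0 := by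
  funext j
  obtain ⟨j, hj⟩ := j
  haveI := aux_neZero (ℓ := ℓ) (c j)
  simp only [aux_Phi, AddMonoidHom.coe_mk, ZeroHom.coe_mk, Pi.zero_apply]
  have hyj : (ℓ ^ k) • (y j) = (ℓ ^ (k + 1)) • (u j) := by
    have := congrFun hy j
    simpa using this
  have hz : (ℓ ^ k) • (y j - ℓ • u j) = 0 := by
    rw [smul_sub, hyj, smul_smul, ← pow_succ]
    exact sub_self _
  have hred := aux_red_zero (by omega) _ hz
  have h1 : (ZMod.castHom (dvd_pow_self ℓ (by omega : c j ≠ 0)) (ZMod ℓ)) (y j - ℓ • u j) = 0 := by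
    rw [ZMod.castHom_apply, ← ZMod.natCast_val]
    exact hred
  have h2 : ∀ v : ZMod ℓ, ℓ • v = 0 := fun v => by
    rw [nsmul_eq_mul, ZMod.natCast_self, zero_mul]
  have := map_sub (ZMod.castHom (dvd_pow_self ℓ (by omega : c j ≠ 0)) (ZMod ℓ)) (y j) (ℓ • u j)
  rw [h1] at this
  have h3 := map_nsmul (ZMod.castHom (dvd_pow_self ℓ (by omega : c j ≠ 0)) (ZMod ℓ)).toAddMonoidHom ℓ (u j)
  simp only [RingHom.toAddMonoidHom_eq_coe, AddMonoidHom.coe_coe] at h3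
  have h4 : (ZMod.castHom (dvd_pow_self ℓ (by omega : c j ≠ 0)) (ZMod ℓ)) (ℓ • u j) = 0 := by
    rw [h3, h2]
  rw [h4] at this
  have := this.symm
  rw [sub_zero] at this
  exact this


lemma aux_card_le {A A' C : Type} [AddCommGroup A] [AddCommGroup A'] [AddCommGroup C]
    [Finite A] (ψ : A →+ A') (g : A →+ C) (hψ : Surjective ψ) (hg : Surjective g)
    (hker : ψ.ker ≤ g.ker) : Nat.card C ≤ Nat.card A' := by
  have h1 : Nat.card A = Nat.card A' * Nat.card ψ.ker := by
    rw [AddSubgroup.card_eq_card_quotient_mul_card_addSubgroup ψ.ker,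
      Nat.card_congr (QuotientAddGroup.quotientKerEquivOfSurjective ψ hψ).toEquiv]
  have h2 : Nat.card A = Nat.card C * Nat.card g.ker := by
    rw [AddSubgroup.card_eq_card_quotient_mul_card_addSubgroup g.ker,
      Nat.card_congr (QuotientAddGroup.quotientKerEquivOfSurjective g hg).toEquiv]
  have hle : Nat.card ψ.ker ≤ Nat.card g.ker :=
    Nat.card_le_card_of_injective (AddSubgroup.inclusion hker)
      (AddSubgroup.inclusion_injective hker)
  have hpos : 0 < Nat.card ψ.ker := Nat.card_pos
  have heq : Nat.card C * Nat.card g.ker = Nat.card A' * Nat.card ψ.ker := by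
    rw [← h1, ← h2]
  have : Nat.card C * Nat.card ψ.ker ≤ Nat.card A' * Nat.card ψ.ker := by
    calc Nat.card C * Nat.card ψ.ker ≤ Nat.card C * Nat.card g.ker :=
          Nat.mul_le_mul_left _ hle
      _ = Nat.card A' * Nat.card ψ.ker := heq
  exact Nat.le_of_mul_le_mul_right this hpos

lemma aux_rank {ιA ιB : Type} [Fintype ιA] [Fintype ιB] (a : ιA → ℕ) (b : ιB → ℕ)
    (f : ((i : ιA) → ZMod (ℓ ^ a i)) →+ ((j : ιB) → ZMod (ℓ ^ b j)))
    (hf : Surjective f) (k : ℕ) :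
    Nat.card {j // k + 1 ≤ b j} ≤ Nat.card {i // k + 1 ≤ a i} := by
  haveI : ∀ i : ιA, NeZero (ℓ ^ a i) := fun i => aux_neZero _
  haveI : ∀ j : ιB, NeZero (ℓ ^ b j) := fun j => aux_neZero _
  have hsA := aux_Phi_surj (ℓ := ℓ) a k
  have hg : Surjective ((aux_Phi (ℓ := ℓ) b k).comp f) :=
    (aux_Phi_surj (ℓ := ℓ) b k).comp hf
  have hker : (aux_Phi (ℓ := ℓ) a k).ker ≤ ((aux_Phi (ℓ := ℓ) b k).comp f).ker := by
    intro x hx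
    rw [AddMonoidHom.mem_ker] at hx ⊢
    obtain ⟨w, hw⟩ := aux_ker_sub a k x hx
    have hfw : (ℓ ^ k) • f x = (ℓ ^ (k + 1)) • f w := by
      rw [← map_nsmul, ← map_nsmul, hw]
    exact aux_ker_to_zero b k (f x) (f w) hfw
  have hcard := aux_card_le (aux_Phi (ℓ := ℓ) a k) ((aux_Phi (ℓ := ℓ) b k).comp f) hsA hg hker
  rw [Nat.card_fun, Nat.card_fun, Nat.card_zmod] at hcard
  exact (Nat.pow_le_pow_iff_right hp.out.one_lt).mp hcard

end aux


set_option maxHeartbeats 1000000 in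
/-- Theorem (dual part): `T` a `ℤ_ℓ[t]`-module free of rank `r` over `ℤ_ℓ` (with `φ`
the action of `t`), `T₁ ⊆ T` a `t`-stable submodule with `T₂ = T/T₁` torsion-free of
rank `r - s`, `1 - t` injective.  If `(m_1,…,m_r)` and `(n'_1,…,n'_{r-s})` are the
increasingly ordered exponents of `T/(1-t)T` and `T₂/(1-t)T₂`, then `m_i ≥ n'_{i-s}`
for `s + 1 ≤ i ≤ r`. -/
theorem hodge_polygon_of_quotient_module (ℓ : ℕ) [Fact ℓ.Prime]
    (T : Type) [AddCommGroup T] [Module ℤ_[ℓ] T] [Module.Free ℤ_[ℓ] T]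
    [Module.Finite ℤ_[ℓ] T]
    (r s : ℕ) (hs : s ≤ r) (hr : Module.finrank ℤ_[ℓ] T = r)
    (φ E : T →ₗ[ℤ_[ℓ]] T) (hEdef : E = LinearMap.id - φ)
    (hE : Function.Injective E)
    (T₁ : Submodule ℤ_[ℓ] T) (hstab : ∀ x ∈ T₁, φ x ∈ T₁)
    (htf : NoZeroSMulDivisors ℤ_[ℓ] (T ⧸ T₁))
    (hrank₂ : Module.finrank ℤ_[ℓ] (T ⧸ T₁) = r - s)
    (hstabE : T₁ ≤ T₁.comap E)
    (m : Fin r → ℕ) (n' : Fin (r - s) → ℕ) (hm : Monotone m) (hn' : Monotone n')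
    (em : (T ⧸ LinearMap.range E) ≃+ Π i : Fin r, ZMod (ℓ ^ m i))
    (en' : ((T ⧸ T₁) ⧸ LinearMap.range (Submodule.mapQ T₁ T₁ E hstabE)) ≃+
      Π i : Fin (r - s), ZMod (ℓ ^ n' i)) :
    ∀ i : Fin (r - s), n' i ≤ m ⟨s + i, by omega⟩ := by
  -- construct the surjection `T ⧸ range E →ₗ (T⧸T₁) ⧸ range Ē`
  set Ebar := Submodule.mapQ T₁ T₁ E hstabE with hEbar
  set π : T →ₗ[ℤ_[ℓ]] ((T ⧸ T₁) ⧸ LinearMap.range Ebar) :=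
    (LinearMap.range Ebar).mkQ.comp T₁.mkQ with hπdef
  have hπker : LinearMap.range E ≤ LinearMap.ker π := by
    rintro _ ⟨y, rfl⟩
    show (LinearMap.range Ebar).mkQ (T₁.mkQ (E y)) = 0
    have h1 : T₁.mkQ (E y) = Ebar (T₁.mkQ y) := by
      rw [Submodule.mkQ_apply, Submodule.mkQ_apply, hEbar, Submodule.mapQ_apply]
    rw [h1, Submodule.mkQ_apply, Submodule.Quotient.mk_eq_zero]
    exact ⟨T₁.mkQ y, rfl⟩
  set f₀ := Submodule.liftQ (LinearMap.range E) π hπker with hf₀def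
  have hf₀ : Surjective f₀ := by
    intro z
    obtain ⟨z', rfl⟩ := Submodule.mkQ_surjective _ z
    obtain ⟨x, rfl⟩ := Submodule.mkQ_surjective T₁ z'
    exact ⟨Submodule.Quotient.mk x, by rw [Submodule.liftQ_apply]; rfl⟩
  set F : ((i : Fin r) → ZMod (ℓ ^ m i)) →+ ((j : Fin (r - s)) → ZMod (ℓ ^ n' j)) :=
    en'.toAddMonoidHom.comp (f₀.toAddMonoidHom.comp em.symm.toAddMonoidHom) with hFdef
  have hF : Surjective F := by
    apply en'.surjective.comp
    exact hf₀.comp em.symm.surjective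
  -- counting
  intro i
  by_contra hlt
  push_neg at hlt
  set k := m ⟨s + i, by omega⟩ with hk
  have hrank := aux_rank m n' F hF k
  rw [Nat.card_eq_fintype_card, Nat.card_eq_fintype_card,
    Fintype.card_subtype, Fintype.card_subtype] at hrank
  have hub : (Finset.univ.filter fun i' : Fin r => k + 1 ≤ m i').card ≤ r - 1 - (s + i) := by
    calc (Finset.univ.filter fun i' : Fin r => k + 1 ≤ m i').card
        ≤ (Finset.Ioi (⟨s + i, by omega⟩ : Fin r)).card := by
          apply Finset.card_le_card
          intro j hj
          rw [Finset.mem_filter] at hj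
          rw [Finset.mem_Ioi]
          by_contra hle
          push_neg at hle
          exact absurd (hm hle) (by omega)
      _ = r - 1 - (s + i) := by rw [Fin.card_Ioi]
  have hlb : (r - s) - i ≤ (Finset.univ.filter fun j : Fin (r - s) => k + 1 ≤ n' j).card := by
    calc (r - s) - (i : ℕ) = (Finset.Ici i).card := (Fin.card_Ici i).symm
      _ ≤ (Finset.univ.filter fun j : Fin (r - s) => k + 1 ≤ n' j).card := by
          apply Finset.card_le_card
          intro j hj
          rw [Finset.mem_Ici] at hj
          rw [Finset.mem_filter]
          exact ⟨Finset.mem_univ _, by have := hn' hj; omega⟩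
  have hi := i.isLt
  omega
end

section
/- Let ℓ be a prime and let X, Y be r×r matrices over ℤ_ℓ[t] with YX = g·I_r for a monic polynomial g ∈ ℤ_ℓ[t] and det X = f a monic polynomial with f(1) ≠ 0 and f dividing g^r. Then T = coker(ℤ_ℓ[t]^r →^X ℤ_ℓ[t]^r) is a free ℤ_ℓ-module of finite rank, and the characteristic polynomial of the action of t on T equals f. -/
open Polynomial

variable {R : Type} [CommRing R] [Nontrivial R]


theorem aux_det_smul_mem (r : ℕ) (U : Matrix (Fin r) (Fin r) R[X]) (v : Fin r → R[X]) :
    U.det • v ∈ LinearMap.range U.mulVecLin := by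
  refine ⟨U.adjugate.mulVec v, ?_⟩
  rw [Matrix.mulVecLin_apply, Matrix.mulVec_mulVec, Matrix.mul_adjugate,
    Matrix.smul_mulVec, Matrix.one_mulVec]

theorem aux_finite (r : ℕ) (U : Matrix (Fin r) (Fin r) R[X]) (f : R[X])
    (hdet : U.det = f) (hf : f.Monic) :
    Module.Finite R ((Fin r → R[X]) ⧸ LinearMap.range U.mulVecLin) := by
  classical
  set d := f.natDegree + 1 with hd
  refine ⟨⟨Finset.univ.image fun p : Fin r × Fin d =>
    Submodule.Quotient.mk ((Pi.single p.1 ((Polynomial.X : R[X]) ^ (p.2 : ℕ)) : Fin r → R[X])), ?_⟩⟩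
  rw [eq_top_iff]
  rintro t -
  obtain ⟨v, rfl⟩ := Submodule.Quotient.mk_surjective _ t
  have hred : (Submodule.Quotient.mk v :
      (Fin r → R[X]) ⧸ LinearMap.range U.mulVecLin) =
      Submodule.Quotient.mk (fun i => v i %ₘ f) := by
    rw [Submodule.Quotient.eq]
    have hsub : v - (fun i => v i %ₘ f) = f • (fun i => v i /ₘ f) := by
      funext i
      simp only [Pi.sub_apply, Pi.smul_apply, smul_eq_mul]
      have := (v i).modByMonic_add_div f
      linear_combination -this
    rw [hsub, ← hdet]
    exact aux_det_smul_mem r U _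
  rw [hred]
  have hdeg : ∀ j, (v j %ₘ f).natDegree < d := by
    intro j
    have : (v j %ₘ f).degree ≤ f.degree := le_of_lt (degree_modByMonic_lt _ hf)
    exact Nat.lt_succ_of_le (natDegree_le_natDegree this)
  have hwrite : (fun i => v i %ₘ f) = ∑ p : Fin r × Fin d,
      ((v p.1 %ₘ f).coeff (p.2 : ℕ)) • (Pi.single p.1 ((Polynomial.X : R[X]) ^ (p.2 : ℕ)) : Fin r → R[X]) := by
    funext j
    rw [Finset.sum_apply]
    have h1 : ∀ p : Fin r × Fin d,
        (((v p.1 %ₘ f).coeff (p.2 : ℕ)) • (Pi.single p.1 ((Polynomial.X : R[X]) ^ (p.2 : ℕ)) : Fin r → R[X])) j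
        = if j = p.1 then ((v j %ₘ f).coeff (p.2 : ℕ)) • (Polynomial.X : R[X]) ^ (p.2 : ℕ)
          else 0 := by
      intro p
      by_cases h : j = p.1
      · subst h; simp [Pi.single_apply]
      · simp [Pi.single_apply, h]
    rw [Finset.sum_congr rfl fun p _ => h1 p, Fintype.sum_prod_type]
    rw [Finset.sum_congr rfl fun i (_ : i ∈ Finset.univ) =>
      (Finset.sum_ite_irrel (j = i) Finset.univ
        (fun k : Fin d => ((v j %ₘ f).coeff (k : ℕ)) • (Polynomial.X : R[X]) ^ (k : ℕ))
        (fun _ => 0))]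
    simp only [Finset.sum_const_zero, Finset.sum_ite_eq, Finset.mem_univ, if_true]
    rw [Fin.sum_univ_eq_sum_range (fun k => ((v j %ₘ f).coeff k) • (Polynomial.X : R[X]) ^ k) d]
    conv_lhs => rw [(v j %ₘ f).as_sum_range' d (hdeg j)]
    refine Finset.sum_congr rfl fun k _ => ?_
    rw [smul_eq_C_mul, C_mul_X_pow_eq_monomial]
  rw [hwrite]
  have hmk := map_sum (((LinearMap.range U.mulVecLin).mkQ).restrictScalars R)
    (fun p : Fin r × Fin d =>
      ((v p.1 %ₘ f).coeff (p.2 : ℕ)) • (Pi.single p.1 ((Polynomial.X : R[X]) ^ (p.2 : ℕ)) : Fin r → R[X]))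
    Finset.univ
  simp only [LinearMap.coe_restrictScalars, Submodule.mkQ_apply, map_smul] at hmk
  rw [show (Submodule.Quotient.mk (∑ p : Fin r × Fin d,
      ((v p.1 %ₘ f).coeff (p.2 : ℕ)) • (Pi.single p.1 ((Polynomial.X : R[X]) ^ (p.2 : ℕ)) : Fin r → R[X])) :
      (Fin r → R[X]) ⧸ LinearMap.range U.mulVecLin) = _ from hmk]
  refine Submodule.sum_mem _ fun p _ => Submodule.smul_mem _ _ (Submodule.subset_span ?_)
  exact Finset.mem_coe.2 (Finset.mem_image.2 ⟨p, Finset.mem_univ p, rfl⟩)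


theorem aux_C_dvd_of_monic_mul (c : R) {g p : R[X]} (hg : g.Monic)
    (h : C c ∣ g * p) : C c ∣ p := by
  rw [C_dvd_iff_dvd_coeff]
  intro i
  rw [← Ideal.mem_span_singleton]
  have hmap : (p.map (Ideal.Quotient.mk (Ideal.span {c}))) = 0 := by
    have h0 : (g * p).map (Ideal.Quotient.mk (Ideal.span {c})) = 0 := by
      obtain ⟨q, hq⟩ := h
      rw [hq, Polynomial.map_mul, map_C, Ideal.Quotient.eq_zero_iff_mem.2
        (Ideal.mem_span_singleton_self c), map_zero, zero_mul]
    rw [Polynomial.map_mul] at h0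
    exact ((hg.map _).mul_right_eq_zero_iff).1 h0
  have := Polynomial.ext_iff.1 hmap i
  rwa [coeff_map, coeff_zero, Ideal.Quotient.eq_zero_iff_mem] at this

theorem aux_torsionfree [IsDomain R] (r : ℕ) (U Y : Matrix (Fin r) (Fin r) R[X])
    (g : R[X]) (hg : g.Monic)
    (hYX : Y * U = g • (1 : Matrix (Fin r) (Fin r) R[X])) :
    NoZeroSMulDivisors R ((Fin r → R[X]) ⧸ LinearMap.range U.mulVecLin) := by
  constructor
  intro c t h
  by_cases hc : c = 0
  · exact Or.inl hc
  right
  obtain ⟨v, rfl⟩ := Submodule.Quotient.mk_surjective _ t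
  rw [← Submodule.Quotient.mk_smul, Submodule.Quotient.mk_eq_zero] at h
  obtain ⟨u, hu⟩ := h
  rw [Matrix.mulVecLin_apply] at hu
  have hcsmul : ∀ w : Fin r → R[X], c • w = (C c : R[X]) • w := by
    intro w; funext i
    simp [smul_eq_C_mul]
  have hgu : g • u = (C c : R[X]) • Y.mulVec v := by
    have h1 : Y.mulVec (U.mulVec u) = g • u := by
      rw [Matrix.mulVec_mulVec, hYX, Matrix.smul_mulVec, Matrix.one_mulVec]
    rw [hu, hcsmul, Matrix.mulVec_smul] at h1
    exact h1.symm
  have hdvd : ∀ i, C c ∣ u i := by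
    intro i
    refine aux_C_dvd_of_monic_mul c hg ?_
    refine ⟨Y.mulVec v i, ?_⟩
    have := congrFun hgu i
    simpa [smul_eq_mul, mul_comm] using this
  choose u' hu' using hdvd
  have huu : u = (C c : R[X]) • u' := funext fun i => by simp [hu' i, Pi.smul_apply, smul_eq_mul]
  have hkey : (C c : R[X]) • (U.mulVec u' - v) = 0 := by
    rw [smul_sub, ← Matrix.mulVec_smul, ← huu, hu, hcsmul, sub_self]
  have hCc : (C c : R[X]) ≠ 0 := fun hh => hc (by simpa using congrArg (fun p => p.coeff 0) hh)
  have hv : U.mulVec u' = v := by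
    funext i
    have := congrFun hkey i
    simp only [Pi.smul_apply, Pi.sub_apply, smul_eq_mul, Pi.zero_apply] at this
    rcases mul_eq_zero.1 this with h' | h'
    · exact absurd h' hCc
    · exact sub_eq_zero.1 h'
  rw [Submodule.Quotient.mk_eq_zero]
  exact ⟨u', by rw [Matrix.mulVecLin_apply, hv]⟩


/-- Column factorization: if every column of `P` is in the range of `Q`, then `P = Q * W`. -/
theorem aux_col_factor {m : Type} [Fintype m] [DecidableEq m] {S : Type} [CommRing S]
    (P Q : Matrix m m S) (h : ∀ j, ∃ w, Q.mulVec w = P.mulVec (Pi.single j 1)) :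
    ∃ W, Q * W = P := by
  choose w hw using h
  refine ⟨Matrix.of fun i j => w j i, ?_⟩
  ext i j
  have := congrFun (hw j) i
  rw [Matrix.mulVec_single_one] at this
  calc (Q * Matrix.of fun i j => w j i) i j = ∑ k, Q i k * w j k := rfl
  _ = Q.mulVec (w j) i := rfl
  _ = P i j := by rw [this]; rfl

set_option maxHeartbeats 1000000 in
theorem aux_charpoly [IsDomain R] (r : ℕ) (U : Matrix (Fin r) (Fin r) R[X]) (f : R[X])
    (hdet : U.det = f) (hf : f.Monic)
    [Module.Finite R ((Fin r → R[X]) ⧸ LinearMap.range U.mulVecLin)]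
    [Module.Free R ((Fin r → R[X]) ⧸ LinearMap.range U.mulVecLin)] :
    LinearMap.charpoly ((Algebra.lsmul R R ((Fin r → R[X]) ⧸ LinearMap.range U.mulVecLin))
      (Polynomial.X : R[X])) = f := by
  classical
  set T := (Fin r → R[X]) ⧸ LinearMap.range U.mulVecLin with hT
  set φ : T →ₗ[R] T := (Algebra.lsmul R R T) (Polynomial.X : R[X]) with hφdef
  have hφ : ∀ t : T, φ t = (Polynomial.X : R[X]) • t := fun t => rfl
  let b := Module.Free.chooseBasis R T
  set ι := Module.Free.ChooseBasisIndex R T with hι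
  set A : Matrix ι ι R := LinearMap.toMatrix b b φ with hA
  rw [← LinearMap.charpoly_toMatrix φ b]
  -- `π` and `ρ`, the two presentations
  set π : (Fin r → R[X]) →ₗ[R[X]] T := (LinearMap.range U.mulVecLin).mkQ with hπdef
  set ρ : (ι → R[X]) →ₗ[R[X]] T :=
    Fintype.linearCombination R[X] (fun i => (b i : T)) with hρdef
  have hρ : ∀ w : ι → R[X], ρ w = ∑ i, w i • (b i : T) := fun w => rfl
  have hπ_surj : Function.Surjective π := Submodule.mkQ_surjective _
  have hρ_surj : Function.Surjective ρ := by
    intro t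
    refine ⟨fun i => Polynomial.C (b.repr t i), ?_⟩
    rw [hρ]
    have : ∀ i : ι, (Polynomial.C (b.repr t i)) • (b i : T) = (b.repr t i) • (b i : T) := by
      intro i
      rw [← Polynomial.algebraMap_eq, algebraMap_smul]
    rw [Finset.sum_congr rfl fun i _ => this i]
    exact b.sum_repr t
  -- the action of the charmatrix
  have hsum_phi : ∀ k : ι, ∑ i, (Polynomial.C (A i k)) • (b i : T) = (Polynomial.X : R[X]) • b k := by
    intro k
    have h1 : ∀ i : ι, (Polynomial.C (A i k)) • (b i : T) = (A i k) • (b i : T) := fun i => by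
      rw [← Polynomial.algebraMap_eq, algebraMap_smul]
    rw [Finset.sum_congr rfl fun i _ => h1 i]
    have h2 : ∀ i : ι, A i k = b.repr (φ (b k)) i := fun i => LinearMap.toMatrix_apply b b φ i k
    rw [Finset.sum_congr rfl fun i _ => by rw [h2 i]]
    rw [b.sum_repr (φ (b k))]
    exact hφ (b k)
  have hAC : ∀ w : ι → R[X], ρ ((A.map Polynomial.C).mulVec w) = (Polynomial.X : R[X]) • ρ w := by
    intro w
    rw [hρ, hρ]
    have h1 : ∀ i : ι, ((A.map Polynomial.C).mulVec w i) • (b i : T)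
        = ∑ k, w k • ((Polynomial.C (A i k)) • (b i : T)) := by
      intro i
      rw [Matrix.mulVec, dotProduct, Finset.sum_smul]
      refine Finset.sum_congr rfl fun k _ => ?_
      rw [Matrix.map_apply, mul_comm, mul_smul]
    rw [Finset.sum_congr rfl fun i _ => h1 i, Finset.sum_comm, Finset.smul_sum]
    refine Finset.sum_congr rfl fun k _ => ?_
    rw [← Finset.smul_sum, hsum_phi k, smul_smul, smul_smul, mul_comm]
  have hCmulVec : ∀ q : ι → R[X], (Matrix.charmatrix A).mulVec q
      = (Polynomial.X : R[X]) • q - (A.map Polynomial.C).mulVec q := by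
    intro q
    rw [Matrix.charmatrix, Matrix.sub_mulVec, Matrix.scalar_apply]
    congr 1
    funext i
    rw [Matrix.mulVec_diagonal]
    rfl
  have hρC : ∀ w : ι → R[X], ρ ((Matrix.charmatrix A).mulVec w) = 0 := by
    intro w
    rw [hCmulVec, map_sub, map_smul, hAC, sub_self]
  -- reduction modulo the charmatrix
  have hreduce : ∀ (n : ℕ) (v : ι → R[X]), (∀ i, (v i).natDegree ≤ n) →
      ∃ (w : ι → R[X]) (c : ι → R), v = (Matrix.charmatrix A).mulVec w + fun i => Polynomial.C (c i) := by
    intro n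
    induction n with
    | zero =>
      intro v hv
      refine ⟨0, fun i => (v i).coeff 0, ?_⟩
      rw [Matrix.mulVec_zero, zero_add]
      funext i
      exact eq_C_of_natDegree_le_zero (hv i)
    | succ n ih =>
      intro v hv
      set q : ι → R[X] := fun i => (v i).divX with hq
      have hv2 : ∀ i, ((A.map Polynomial.C).mulVec q i + Polynomial.C ((v i).coeff 0)).natDegree ≤ n := by
        intro i
        refine (natDegree_add_le _ _).trans (max_le ?_ (by simp))
        rw [Matrix.mulVec, dotProduct]
        refine (natDegree_sum_le _ _).trans ?_
        rw [Finset.fold_max_le]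
        refine ⟨Nat.zero_le n, fun k _ => ?_⟩
        refine (natDegree_C_mul_le _ _).trans ?_
        have := natDegree_divX_eq_natDegree_tsub_one (p := v k)
        have h2 := hv k
        show (v k).divX.natDegree ≤ n
        omega
      obtain ⟨w2, c, hw2⟩ := ih (fun i => (A.map Polynomial.C).mulVec q i + Polynomial.C ((v i).coeff 0)) hv2
      refine ⟨q + w2, c, ?_⟩
      have hvq : v = (Matrix.charmatrix A).mulVec q
          + fun i => (A.map Polynomial.C).mulVec q i + Polynomial.C ((v i).coeff 0) := by
        rw [hCmulVec]
        funext i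
        rw [Pi.add_apply, Pi.sub_apply, Pi.smul_apply, smul_eq_mul]
        conv_lhs => rw [← X_mul_divX_add (v i)]
        ring
      rw [hvq, hw2, Matrix.mulVec_add, add_assoc]
  -- exactness: kernel of ρ is the range of the charmatrix
  have hker : ∀ v : ι → R[X], ρ v = 0 → ∃ w, (Matrix.charmatrix A).mulVec w = v := by
    intro v hv0
    obtain ⟨w, c, hwc⟩ := hreduce (Finset.univ.sup fun i => (v i).natDegree) v
      (fun i => Finset.le_sup (f := fun i => (v i).natDegree) (Finset.mem_univ i))
    have h1 : ρ (fun i => Polynomial.C (c i)) = 0 := by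
      have h2 := congrArg ρ hwc
      rw [map_add, hρC w, zero_add, hv0] at h2
      exact h2.symm
    have hc0 : ∀ i, c i = 0 := by
      have h3 : ρ (fun i => Polynomial.C (c i)) = ∑ j, c j • (b j : T) := by
        rw [hρ]
        exact Finset.sum_congr rfl fun j _ => by
          rw [← Polynomial.algebraMap_eq, algebraMap_smul]
      have h4 : ∑ j, c j • (b j : T) = 0 := by rw [← h3, h1]
      exact Fintype.linearIndependent_iff.1 b.linearIndependent c h4
    have h5 : (fun i => Polynomial.C (c i)) = (0 : ι → R[X]) :=
      funext fun i => by simp [hc0 i]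
    exact ⟨w, by rw [hwc, h5, add_zero]⟩
  -- the lifts α' and β'
  obtain ⟨a, ha⟩ : ∃ a : ι → (Fin r → R[X]), ∀ i, π (a i) = b i :=
    ⟨fun i => Classical.choose (hπ_surj (b i)), fun i => Classical.choose_spec (hπ_surj (b i))⟩
  set α' : Matrix (Fin r) ι R[X] := Matrix.of fun k i => a i k with hα'def
  have hα : ∀ w : ι → R[X], π (α'.mulVec w) = ρ w := by
    intro w
    have h1 : α'.mulVec w = ∑ i, w i • a i := by
      funext k
      rw [Matrix.mulVec, dotProduct, Finset.sum_apply]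
      exact Finset.sum_congr rfl fun i _ => by
        rw [Pi.smul_apply, smul_eq_mul, mul_comm]
        rfl
    rw [h1, map_sum, hρ]
    exact Finset.sum_congr rfl fun i _ => by rw [map_smul, ha i]
  obtain ⟨e, he⟩ : ∃ e : Fin r → (ι → R[X]), ∀ j, ρ (e j) = π (Pi.single j 1) :=
    ⟨fun j => Classical.choose (hρ_surj (π (Pi.single j 1))),
     fun j => Classical.choose_spec (hρ_surj (π (Pi.single j 1)))⟩
  set β' : Matrix ι (Fin r) R[X] := Matrix.of fun i j => e j i with hβ'def
  have hβ : ∀ u : Fin r → R[X], ρ (β'.mulVec u) = π u := by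
    intro u
    have h1 : β'.mulVec u = ∑ j, u j • e j := by
      funext k
      rw [Matrix.mulVec, dotProduct, Finset.sum_apply]
      exact Finset.sum_congr rfl fun j _ => by
        rw [Pi.smul_apply, smul_eq_mul, mul_comm]
        rfl
    have h3 : ∑ j, u j • (Pi.single j (1:R[X]) : Fin r → R[X]) = u := by
      funext k
      rw [Finset.sum_apply]
      have : ∀ j : Fin r, (u j • (Pi.single j (1:R[X]) : Fin r → R[X])) k
          = if k = j then u j else 0 := by
        intro j
        by_cases h : k = j
        · subst h; simp [Pi.single_apply]
        · simp [Pi.single_apply, h]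
      rw [Finset.sum_congr rfl fun j _ => this j, Finset.sum_ite_eq, if_pos (Finset.mem_univ k)]
    rw [h1, map_sum]
    rw [Finset.sum_congr rfl fun j (_ : j ∈ Finset.univ) => by
      rw [map_smul, he j, ← map_smul π]]
    rw [← map_sum, h3]
  -- the combined surjection σ
  set σ : ((Fin r ⊕ ι) → R[X]) →ₗ[R[X]] T :=
    π.comp (LinearMap.funLeft R[X] R[X] Sum.inl) + ρ.comp (LinearMap.funLeft R[X] R[X] Sum.inr)
    with hσdef
  have hσelim : ∀ (x : Fin r → R[X]) (y : ι → R[X]), σ (Sum.elim x y) = π x + ρ y := by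
    intro x y
    rw [hσdef]
    rfl
  have hπU : ∀ u : Fin r → R[X], π (U.mulVec u) = 0 := fun u =>
    (Submodule.Quotient.mk_eq_zero _).2 ⟨u, rfl⟩
  set N1 : Matrix (Fin r ⊕ ι) (Fin r ⊕ ι) R[X] := Matrix.fromBlocks U α' 0 (-1) with hN1def
  set N2 : Matrix (Fin r ⊕ ι) (Fin r ⊕ ι) R[X] :=
    Matrix.fromBlocks (-1) 0 β' (Matrix.charmatrix A) with hN2def
  have hmv1 : ∀ (x : Fin r → R[X]) (y : ι → R[X]), N1.mulVec (Sum.elim x y)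
      = Sum.elim (U.mulVec x + α'.mulVec y) (-y) := by
    intro x y
    rw [hN1def, Matrix.fromBlocks_mulVec, Matrix.zero_mulVec, zero_add,
      Matrix.neg_mulVec, Matrix.one_mulVec]
    funext z
    cases z <;> simp
  have hmv2 : ∀ (x : Fin r → R[X]) (y : ι → R[X]), N2.mulVec (Sum.elim x y)
      = Sum.elim (-x) (β'.mulVec x + (Matrix.charmatrix A).mulVec y) := by
    intro x y
    rw [hN2def, Matrix.fromBlocks_mulVec, Matrix.zero_mulVec, add_zero,
      Matrix.neg_mulVec, Matrix.one_mulVec]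
    funext z
    cases z <;> simp
  have hσN1 : ∀ w, σ (N1.mulVec w) = 0 := by
    intro w
    conv_lhs => rw [← Sum.elim_comp_inl_inr w]
    rw [hmv1, hσelim, map_add, hα, hπU, zero_add, map_neg, add_neg_cancel]
  have hσN2 : ∀ w, σ (N2.mulVec w) = 0 := by
    intro w
    conv_lhs => rw [← Sum.elim_comp_inl_inr w]
    rw [hmv2, hσelim, map_add, hβ, hρC, add_zero, map_neg, neg_add_cancel]
  have hmem1 : ∀ v, σ v = 0 → ∃ w, N1.mulVec w = v := by
    intro v hv0
    rw [← Sum.elim_comp_inl_inr v, hσelim] at hv0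
    have h1 : π ((v ∘ Sum.inl) + α'.mulVec (v ∘ Sum.inr)) = 0 := by
      rw [map_add, hα]
      exact hv0
    have h2 : (v ∘ Sum.inl) + α'.mulVec (v ∘ Sum.inr) ∈ LinearMap.range U.mulVecLin :=
      (Submodule.Quotient.mk_eq_zero _).1 h1
    obtain ⟨u, hu⟩ := h2
    rw [Matrix.mulVecLin_apply] at hu
    refine ⟨Sum.elim u (-(v ∘ Sum.inr)), ?_⟩
    rw [hmv1, Matrix.mulVec_neg, hu, neg_neg]
    funext z
    cases z <;> simp
  have hmem2 : ∀ v, σ v = 0 → ∃ w, N2.mulVec w = v := by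
    intro v hv0
    rw [← Sum.elim_comp_inl_inr v, hσelim] at hv0
    have h1 : ρ ((v ∘ Sum.inr) + β'.mulVec (v ∘ Sum.inl)) = 0 := by
      rw [map_add, hβ, add_comm]
      exact hv0
    obtain ⟨w2, hw2⟩ := hker _ h1
    refine ⟨Sum.elim (-(v ∘ Sum.inl)) w2, ?_⟩
    rw [hmv2, Matrix.mulVec_neg, hw2, neg_neg]
    funext z
    cases z <;> simp
  -- column factorizations
  obtain ⟨P, hP⟩ := aux_col_factor N1 N2 fun j => hmem2 _ (hσN1 (Pi.single j 1))
  obtain ⟨Q, hQ⟩ := aux_col_factor N2 N1 fun j => hmem1 _ (hσN2 (Pi.single j 1))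
  -- determinants
  have hdetneg : ∀ (m : Type) (_ : Fintype m) (_ : DecidableEq m),
      (-1 : Matrix m m R[X]).det = (-1 : R[X]) ^ (Fintype.card m) := by
    intro m _ _
    rw [show (-1 : Matrix m m R[X]) = -(1 : Matrix m m R[X]) from rfl, Matrix.det_neg,
      Matrix.det_one, mul_one]
  have hdet1 : N1.det = f * (-1 : R[X]) ^ (Fintype.card ι) := by
    rw [hN1def, Matrix.det_fromBlocks_zero₂₁, hdet, hdetneg ι _ _]
  have hdet2 : N2.det = (-1 : R[X]) ^ r * A.charpoly := by
    rw [hN2def, Matrix.det_fromBlocks_zero₁₂, hdetneg (Fin r) _ _, Fintype.card_fin]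
    rfl
  have hfP : N2.det * P.det = N1.det := by rw [← Matrix.det_mul, hP]
  have hfQ : N1.det * Q.det = N2.det := by rw [← Matrix.det_mul, hQ]
  have hN1ne : N1.det ≠ 0 := by
    rw [hdet1]
    exact mul_ne_zero hf.ne_zero (pow_ne_zero _ (neg_ne_zero.2 one_ne_zero))
  have hPQ : Q.det * P.det = 1 := by
    have h1 : N1.det * (1 - Q.det * P.det) = 0 := by
      rw [mul_sub, mul_one, ← mul_assoc, hfQ, hfP, sub_self]
    have h2 := (mul_eq_zero.1 h1).resolve_left hN1ne
    have h3 := sub_eq_zero.1 h2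
    exact h3.symm
  have hunit : IsUnit P.det := IsUnit.of_mul_eq_one _ (by rw [mul_comm, hPQ])
  set n := Fintype.card ι with hn
  have hsq : ((-1 : R[X]) ^ n) * ((-1 : R[X]) ^ n) = 1 := by
    rw [← pow_add]
    exact Even.neg_one_pow ⟨n, rfl⟩
  set c : R[X] := (-1 : R[X]) ^ r * P.det * (-1 : R[X]) ^ n with hc
  have hfcp : f = c * A.charpoly := by
    have h2 := congrArg (fun z => z * (-1 : R[X]) ^ n) (by rw [← hdet1, ← hfP, hdet2] :
      f * (-1 : R[X]) ^ n = (-1 : R[X]) ^ r * A.charpoly * P.det)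
    rw [mul_assoc, hsq, mul_one] at h2
    rw [h2, hc]
    ring
  have hcunit : IsUnit c := by
    rw [hc]
    exact (((isUnit_one.neg).pow r).mul hunit).mul ((isUnit_one.neg).pow n)
  obtain ⟨u0, hu0, hcu⟩ := Polynomial.isUnit_iff.1 hcunit
  have hlead : (1 : R) = u0 := by
    have h4 := congrArg Polynomial.leadingCoeff hfcp
    rw [hf.leadingCoeff, ← hcu, leadingCoeff_mul, leadingCoeff_C,
      (A.charpoly_monic).leadingCoeff, mul_one] at h4
    exact h4
  rw [hfcp, ← hcu, ← hlead, map_one, one_mul]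


/-- Matrix factorizations give Tate modules: if `X, Y` are `r × r` matrices over
`ℤ_ℓ[t]` with `Y * X = g • 1` for a monic `g`, `det X = f` monic with `f(1) ≠ 0` and
`f ∣ g^r`, then `T = coker(X : ℤ_ℓ[t]^r → ℤ_ℓ[t]^r)` is a free `ℤ_ℓ`-module of finite
rank and the characteristic polynomial of the action of `t` on `T` equals `f`. -/
theorem coker_of_matrix_factorization (ℓ : ℕ) [Fact ℓ.Prime] (r : ℕ)
    (X Y : Matrix (Fin r) (Fin r) (Polynomial ℤ_[ℓ]))
    (g f : Polynomial ℤ_[ℓ]) (hg : g.Monic) (hYX : Y * X = g • (1 : Matrix (Fin r) (Fin r) (Polynomial ℤ_[ℓ])))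
    (hdet : X.det = f) (hf : f.Monic) (hf1 : f.eval 1 ≠ 0) (hdvd : f ∣ g ^ r) :
    ∃ (_ : Module.Free ℤ_[ℓ] ((Fin r → Polynomial ℤ_[ℓ]) ⧸ LinearMap.range X.mulVecLin))
      (_ : Module.Finite ℤ_[ℓ] ((Fin r → Polynomial ℤ_[ℓ]) ⧸ LinearMap.range X.mulVecLin)),
      LinearMap.charpoly
        ((Algebra.lsmul ℤ_[ℓ] ℤ_[ℓ]
          ((Fin r → Polynomial ℤ_[ℓ]) ⧸ LinearMap.range X.mulVecLin))
          (Polynomial.X : Polynomial ℤ_[ℓ])) = f := by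
  haveI hFin : Module.Finite ℤ_[ℓ]
      ((Fin r → Polynomial ℤ_[ℓ]) ⧸ LinearMap.range X.mulVecLin) :=
    aux_finite r X f hdet hf
  haveI hTF : NoZeroSMulDivisors ℤ_[ℓ]
      ((Fin r → Polynomial ℤ_[ℓ]) ⧸ LinearMap.range X.mulVecLin) :=
    aux_torsionfree r X Y g hg hYX
  haveI hFree : Module.Free ℤ_[ℓ]
      ((Fin r → Polynomial ℤ_[ℓ]) ⧸ LinearMap.range X.mulVecLin) :=
    Module.free_of_finite_type_torsion_free'
  exact ⟨hFree, hFin, aux_charpoly r X f hdet hf⟩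
end

section
/- Let ℓ be a prime and (X,Y) a pair of r×r matrices over ℤ_ℓ[t] with YX = g·I_r for a monic polynomial g, det X = f, and X ≡ diag(ℓ^{m_1},…,ℓ^{m_r}) mod (1−t)ℤ_ℓ[t]. Then det Y = g^r/f, and Y ≡ diag(ℓ^{n−m_1},…,ℓ^{n−m_r}) mod (1−t)ℤ_ℓ[t] up to units, where ℓ^n is the ℓ-part of g(1); in particular, if T' = coker(ℤ_ℓ[t]^r →^Y ℤ_ℓ[t]^r) and m = v_ℓ(g(1)), then T'/(1−t)T' ≅ ⊕_{i=1}^r ℤ/ℓ^{m−m_i}ℤ. -/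
open Polynomial

/-- The dual matrix factorization: if `Y * X = g • 1` with `g` monic, `det X = f`,
`f(1) ≠ 0`, and `X ≡ diag(ℓ^{m_1},…,ℓ^{m_r}) mod (1-t)`, with `m = v_ℓ(g(1))` and each
`m_i ≤ m`, then `f * det Y = g^r`, `Y ≡ diag(ℓ^{m-m_1},…,ℓ^{m-m_r}) mod (1-t)` up to
`ℤ_ℓ`-units, and for `T' = coker Y` one has `T'/(1-t)T' ≅ ⊕_i ℤ/ℓ^{m-m_i}`. -/
theorem dual_matrix_factorization (ℓ : ℕ) [Fact ℓ.Prime] (r : ℕ)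
    (X Y : Matrix (Fin r) (Fin r) (Polynomial ℤ_[ℓ]))
    (g f : Polynomial ℤ_[ℓ]) (hg : g.Monic)
    (hYX : Y * X = g • (1 : Matrix (Fin r) (Fin r) (Polynomial ℤ_[ℓ])))
    (hdet : X.det = f) (hf1 : f.eval 1 ≠ 0) (hg1 : g.eval 1 ≠ 0)
    (m : ℕ) (hm : (g.eval 1).valuation = (m : ℤ))
    (mi : Fin r → ℕ) (hmi : ∀ i, mi i ≤ m)
    (Z : Matrix (Fin r) (Fin r) (Polynomial ℤ_[ℓ]))
    (hX : X = Matrix.diagonal (fun i => (C ((ℓ : ℤ_[ℓ]) ^ mi i) : Polynomial ℤ_[ℓ]))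
      + ((1 - Polynomial.X : Polynomial ℤ_[ℓ])) • Z) :
    f * Y.det = g ^ r ∧
    (∃ (u : Fin r → ℤ_[ℓ]ˣ) (Z' : Matrix (Fin r) (Fin r) (Polynomial ℤ_[ℓ])),
      Y = Matrix.diagonal (fun i => (C ((u i : ℤ_[ℓ]) * (ℓ : ℤ_[ℓ]) ^ (m - mi i))))
        + ((1 - Polynomial.X : Polynomial ℤ_[ℓ])) • Z') ∧
    Nonempty ((((Fin r → Polynomial ℤ_[ℓ]) ⧸ LinearMap.range Y.mulVecLin) ⧸
        ((Ideal.span {(1 - Polynomial.X : Polynomial ℤ_[ℓ])}) •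
          (⊤ : Submodule (Polynomial ℤ_[ℓ])
            ((Fin r → Polynomial ℤ_[ℓ]) ⧸ LinearMap.range Y.mulVecLin)))) ≃+
      Π i : Fin r, ZMod (ℓ ^ (m - mi i))) := by
  have hp : ℓ.Prime := Fact.out
  have hl0 : (ℓ : ℤ_[ℓ]) ≠ 0 := Nat.cast_ne_zero.mpr hp.ne_zero
  set ev : Polynomial ℤ_[ℓ] →+* ℤ_[ℓ] := evalRingHom 1 with hev
  -- Part 1
  have part1 : f * Y.det = g ^ r := by
    have h := congrArg Matrix.det hYX
    rw [Matrix.det_mul, hdet, Matrix.det_smul, Matrix.det_one, mul_one,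
      Fintype.card_fin] at h
    rw [mul_comm]; exact h
  -- evaluated matrices
  have hXe : X.map ev = Matrix.diagonal (fun i => (ℓ : ℤ_[ℓ]) ^ mi i) := by
    subst hX
    ext i j
    by_cases h : i = j <;>
      simp [Matrix.map_apply, Matrix.diagonal_apply, h, hev, smul_eq_mul]
  have hYXe : Y.map ev * X.map ev = (g.eval 1) • (1 : Matrix (Fin r) (Fin r) ℤ_[ℓ]) := by
    rw [← Matrix.map_mul, hYX]
    ext i j
    by_cases h : i = j <;>
      simp [Matrix.map_apply, Matrix.one_apply, h, hev, smul_eq_mul]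
  set u : ℤ_[ℓ]ˣ := PadicInt.unitCoeff hg1 with hu
  have hgu : g.eval 1 = (u : ℤ_[ℓ]) * (ℓ : ℤ_[ℓ]) ^ m := by
    have h1 : (g.eval 1).valuation = m := by exact_mod_cast hm
    have := PadicInt.unitCoeff_spec hg1
    rw [h1] at this
    exact this
  rw [hXe] at hYXe
  have key : ∀ i j, (Y.map ⇑ev) i j * (ℓ : ℤ_[ℓ]) ^ mi j
      = if i = j then g.eval 1 else 0 := by
    intro i j
    have h2 := congrFun (congrFun hYXe i) j
    rw [Matrix.mul_diagonal] at h2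
    simpa [Matrix.smul_apply, Matrix.one_apply] using h2
  have hYe : ∀ i j, (Y i j).eval 1
      = if i = j then (u : ℤ_[ℓ]) * (ℓ : ℤ_[ℓ]) ^ (m - mi i) else 0 := by
    intro i j
    have h2 := key i j
    by_cases h : i = j
    · subst h
      simp only [eq_self_iff_true, if_true] at h2 ⊢
      have hsplit : (ℓ : ℤ_[ℓ]) ^ m = (ℓ : ℤ_[ℓ]) ^ (m - mi i) * (ℓ : ℤ_[ℓ]) ^ mi i := by
        rw [← pow_add, Nat.sub_add_cancel (hmi i)]
      have : (Y.map ⇑ev) i i * (ℓ : ℤ_[ℓ]) ^ mi i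
          = ((u : ℤ_[ℓ]) * (ℓ : ℤ_[ℓ]) ^ (m - mi i)) * (ℓ : ℤ_[ℓ]) ^ mi i := by
        rw [h2, hgu, hsplit]; ring
      have h3 := mul_right_cancel₀ (pow_ne_zero _ hl0) this
      simpa [Matrix.map_apply, hev] using h3
    · simp only [if_neg h] at h2 ⊢
      rcases mul_eq_zero.mp h2 with h3 | h3
      · simpa [Matrix.map_apply, hev] using h3
      · exact absurd h3 (pow_ne_zero _ hl0)
  -- Part 2
  have hdvd : ∀ p : Polynomial ℤ_[ℓ], (1 - Polynomial.X : Polynomial ℤ_[ℓ]) ∣ (p - C (p.eval 1)) := by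
    intro p
    have h := X_sub_C_dvd_sub_C_eval (a := (1 : ℤ_[ℓ])) (p := p)
    rw [map_one] at h
    rw [show (1 - Polynomial.X : Polynomial ℤ_[ℓ]) = -(Polynomial.X - 1) by ring]
    exact (neg_dvd).mpr h
  have hQ : ∀ i j, ∃ q, Y i j - C ((Y i j).eval 1) = (1 - Polynomial.X) * q :=
    fun i j => hdvd (Y i j)
  choose Q hQspec using hQ
  have part2 : ∃ (u' : Fin r → ℤ_[ℓ]ˣ) (Z' : Matrix (Fin r) (Fin r) (Polynomial ℤ_[ℓ])),
      Y = Matrix.diagonal (fun i => (C ((u' i : ℤ_[ℓ]) * (ℓ : ℤ_[ℓ]) ^ (m - mi i))))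
        + ((1 - Polynomial.X : Polynomial ℤ_[ℓ])) • Z' := by
    refine ⟨fun _ => u, Matrix.of Q, ?_⟩
    ext i j
    have h1 := hQspec i j
    have h2 : Y i j = C ((Y i j).eval 1) + (1 - Polynomial.X) * Q i j := by
      linear_combination h1
    rw [h2, hYe i j]
    by_cases h : i = j
    · subst h; simp [Matrix.diagonal_apply, smul_eq_mul]
    · simp [Matrix.diagonal_apply, h, smul_eq_mul]
  refine ⟨part1, part2, ?_⟩
  -- Part 3
  classical
  set I : Ideal (Polynomial ℤ_[ℓ]) := Ideal.span {(1 - Polynomial.X : Polynomial ℤ_[ℓ])} with hI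
  set S : Submodule (Polynomial ℤ_[ℓ]) (Fin r → Polynomial ℤ_[ℓ]) := LinearMap.range Y.mulVecLin with hS
  set K : Submodule (Polynomial ℤ_[ℓ]) (Fin r → Polynomial ℤ_[ℓ]) := S ⊔ I • ⊤ with hK
  let φ : (Fin r → Polynomial ℤ_[ℓ]) →+ (Π i : Fin r, ZMod (ℓ ^ (m - mi i))) :=
    { toFun := fun v i => PadicInt.toZModPow (m - mi i) ((v i).eval 1)
      map_zero' := by funext i; simp
      map_add' := by intro a b; funext i; simp }
  have hφ : ∀ (v : Fin r → Polynomial ℤ_[ℓ]) (i : Fin r),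
      φ v i = PadicInt.toZModPow (m - mi i) ((v i).eval 1) := fun _ _ => rfl
  have hzero0 : ∀ (n : ℕ) (c : ℤ_[ℓ]), PadicInt.toZModPow n ((ℓ : ℤ_[ℓ]) ^ n * c) = 0 := by
    intro n c
    rw [map_mul, map_pow, map_natCast, ← Nat.cast_pow, ZMod.natCast_self, zero_mul]
  have hmv : ∀ (w : Fin r → Polynomial ℤ_[ℓ]) (i : Fin r),
      ((Y.mulVec w) i).eval 1 = ((u : ℤ_[ℓ]) * (ℓ : ℤ_[ℓ]) ^ (m - mi i)) * ((w i).eval 1) := by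
    intro w i
    have h1 : (Y.mulVec w) i = ∑ j, Y i j * w j := rfl
    rw [h1, eval_finset_sum]
    have h2 : ∀ j, ((Y i j * w j).eval 1)
        = (if i = j then (u : ℤ_[ℓ]) * (ℓ : ℤ_[ℓ]) ^ (m - mi i) else 0) * ((w j).eval 1) := by
      intro j; rw [eval_mul, hYe i j]
    simp only [h2, ite_mul, zero_mul]
    simp
  have hker : φ.ker = K.toAddSubgroup := by
    ext v
    simp only [AddMonoidHom.mem_ker, Submodule.mem_toAddSubgroup]
    constructor
    · intro hv
      have hdvd1 : ∀ i, (ℓ : ℤ_[ℓ]) ^ (m - mi i) ∣ (v i).eval 1 := by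
        intro i
        have h1 : (v i).eval 1 ∈ RingHom.ker (PadicInt.toZModPow (m - mi i)) := by
          have h0 := congrFun hv i
          rw [hφ] at h0
          simpa using h0
        rw [PadicInt.ker_toZModPow, Ideal.mem_span_singleton] at h1
        exact h1
      choose c hc using hdvd1
      set w : Fin r → Polynomial ℤ_[ℓ] := fun i => C (((u⁻¹ : ℤ_[ℓ]ˣ) : ℤ_[ℓ]) * c i) with hw
      have hzero2 : ∀ i, ((v - Y.mulVec w) i).eval 1 = 0 := by
        intro i
        have h2 := hmv w i
        have huu : (u : ℤ_[ℓ]) * ((u⁻¹ : ℤ_[ℓ]ˣ) : ℤ_[ℓ]) = 1 := u.mul_inv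
        simp only [Pi.sub_apply, eval_sub, h2]
        simp only [hw, eval_C]
        rw [hc i]
        linear_combination (-((ℓ : ℤ_[ℓ]) ^ (m - mi i) * c i)) * huu
      have hdvd2 : ∀ i, ∃ q, (v - Y.mulVec w) i = (1 - Polynomial.X) * q := by
        intro i
        have h3 : (Polynomial.X - C (1 : ℤ_[ℓ])) ∣ (v - Y.mulVec w) i :=
          dvd_iff_isRoot.mpr (hzero2 i)
        rw [map_one] at h3
        have h4 : (1 - Polynomial.X : Polynomial ℤ_[ℓ]) ∣ (v - Y.mulVec w) i := by
          rw [show (1 - Polynomial.X : Polynomial ℤ_[ℓ]) = -(Polynomial.X - 1) by ring]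
          exact neg_dvd.mpr h3
        exact h4
      choose q hq using hdvd2
      have hsub : v - Y.mulVec w ∈ I • (⊤ : Submodule (Polynomial ℤ_[ℓ]) (Fin r → Polynomial ℤ_[ℓ])) := by
        have heq : v - Y.mulVec w = (1 - Polynomial.X : Polynomial ℤ_[ℓ]) • q := by
          funext i; simp only [Pi.smul_apply, smul_eq_mul]; exact hq i
        rw [heq]
        exact Submodule.smul_mem_smul (Ideal.subset_span (Set.mem_singleton _)) trivial
      have hvsplit : v = Y.mulVec w + (v - Y.mulVec w) := by abel
      rw [hK, hvsplit]
      exact Submodule.add_mem_sup ⟨w, Matrix.mulVecLin_apply _ _⟩ hsub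
    · intro hv
      obtain ⟨a, ha, b, hb, rfl⟩ := Submodule.mem_sup.mp hv
      have hφa : φ a = 0 := by
        obtain ⟨w, rfl⟩ := ha
        funext i
        rw [hφ]
        simp only [Matrix.mulVecLin_apply]
        rw [hmv w i, show (u : ℤ_[ℓ]) * (ℓ : ℤ_[ℓ]) ^ (m - mi i) * ((w i).eval 1)
          = (ℓ : ℤ_[ℓ]) ^ (m - mi i) * ((u : ℤ_[ℓ]) * (w i).eval 1) by ring, hzero0]
        rfl
      have hφb : φ b = 0 := by
        refine Submodule.smul_induction_on hb ?_ ?_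
        · intro a' ha' n _
          funext i
          rw [Ideal.mem_span_singleton] at ha'
          obtain ⟨d, rfl⟩ := ha'
          rw [hφ]
          simp [smul_eq_mul]
        · intro x y hx hy; rw [map_add, hx, hy, add_zero]
      rw [map_add, hφa, hφb, add_zero]
  have hsurj : Function.Surjective φ := by
    intro t
    refine ⟨fun i => C (((t i).val : ℤ_[ℓ])), ?_⟩
    funext i
    haveI : NeZero (ℓ ^ (m - mi i)) := ⟨pow_ne_zero _ hp.ne_zero⟩
    rw [hφ]
    simp only [eval_C, eval_natCast, map_natCast]
    exact ZMod.natCast_rightInverse (t i)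
  have hmapeq : (I • (⊤ : Submodule (Polynomial ℤ_[ℓ]) ((Fin r → Polynomial ℤ_[ℓ]) ⧸ S)))
      = Submodule.map S.mkQ (I • ⊤) := by
    rw [Submodule.map_smul'', Submodule.map_top, Submodule.range_mkQ]
  let e0 := Submodule.quotEquivOfEq _ _ hmapeq
  let e1 := Submodule.quotientQuotientEquivQuotientSup S (I • ⊤)
  let e2 : ((Fin r → Polynomial ℤ_[ℓ]) ⧸ K) ≃+ ((Fin r → Polynomial ℤ_[ℓ]) ⧸ K.toAddSubgroup) :=
    AddEquiv.refl _
  let e3 := QuotientAddGroup.quotientAddEquivOfEq hker.symm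
  let e4 := QuotientAddGroup.quotientKerEquivOfSurjective φ hsurj
  exact ⟨(((e0.trans e1).toAddEquiv.trans e2).trans e3).trans e4⟩
end

section
/- Let G be a finite abelian ℓ-group with invariant exponents (m_1 ≤ … ≤ m_r) (padded with zeros so that G is generated by r elements), and let H' ⊆ G be the subgroup generated by elements u_1, …, u_i of orders ℓ^{n_1}, …, ℓ^{n_i}. If G/H' is generated by r − i elements, then there exists an element v = Σ_{j≥i} a_j v_j ∈ H' (where v_j generate the cyclic summands ℤ/ℓ^{m_j}ℤ of G) with some a_j a unit modulo ℓ, where the sum runs over j = i, …, r. -/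
lemma aux_card_eq {G H : Type*} [AddGroup G] [AddGroup H] (f : G →+ H) :
    Nat.card G = Nat.card f.range * Nat.card (f.ker) := by
  rw [AddSubgroup.card_eq_card_quotient_mul_card_addSubgroup f.ker,
    Nat.card_congr (QuotientAddGroup.quotientKerEquivRange f).toEquiv]

lemma aux_smul_mod {A : Type*} [AddCommGroup A] {ℓ : ℕ} (z : A) (hz : ℓ • z = 0) (n : ℕ) :
    n • z = (n % ℓ) • z := by
  conv_lhs => rw [← Nat.div_add_mod n ℓ]
  rw [add_smul, mul_comm, mul_smul, hz, smul_zero, zero_add]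

lemma aux_kill {ℓ M : ℕ} (hM : 1 ≤ M) (v : ZMod (ℓ ^ M)) :
    ℓ • ((ℓ : ZMod (ℓ ^ M)) ^ (M - 1) * v) = 0 := by
  rw [nsmul_eq_mul, ← mul_assoc, ← pow_succ']
  have h1 : M - 1 + 1 = M := by omega
  rw [h1, ← Nat.cast_pow, ZMod.natCast_self, zero_mul]

lemma aux_inj {ℓ : ℕ} (hℓ : ℓ.Prime) {M : ℕ} (hM : 1 ≤ M) {a b : ZMod ℓ}
    (h : (ℓ : ZMod (ℓ ^ M)) ^ (M - 1) * (a.val : ZMod (ℓ ^ M))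
       = (ℓ : ZMod (ℓ ^ M)) ^ (M - 1) * (b.val : ZMod (ℓ ^ M))) : a = b := by
  haveI : NeZero ℓ := ⟨hℓ.ne_zero⟩
  have h' : ((ℓ ^ (M - 1) * a.val : ℕ) : ZMod (ℓ ^ M)) = ((ℓ ^ (M - 1) * b.val : ℕ) : ZMod (ℓ ^ M)) := by
    push_cast; exact h
  rw [ZMod.natCast_eq_natCast_iff] at h'
  have hdvd : ((ℓ : ℤ) ^ M) ∣ ((ℓ ^ (M - 1) * b.val : ℕ) : ℤ) - ((ℓ ^ (M - 1) * a.val : ℕ) : ℤ) := by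
    have := (Nat.modEq_iff_dvd).mp h'
    push_cast at this ⊢
    exact_mod_cast this
  have h2 : ((ℓ : ℤ) ^ (M - 1)) * ℓ ∣ ((ℓ : ℤ) ^ (M - 1)) * ((b.val : ℤ) - (a.val : ℤ)) := by
    have hM' : M - 1 + 1 = M := by omega
    calc ((ℓ : ℤ) ^ (M - 1)) * ℓ = (ℓ : ℤ) ^ M := by rw [← pow_succ, hM']
    _ ∣ _ := by push_cast at hdvd ⊢; convert hdvd using 1; ring
  have hne : ((ℓ : ℤ) ^ (M - 1)) ≠ 0 := by
    exact pow_ne_zero _ (by exact_mod_cast hℓ.ne_zero)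
  have h3 : (ℓ : ℤ) ∣ (b.val : ℤ) - (a.val : ℤ) := (mul_dvd_mul_iff_left hne).mp h2
  have ha := ZMod.val_lt a
  have hb := ZMod.val_lt b
  have h4 : (b.val : ℤ) - (a.val : ℤ) = 0 := by
    refine Int.eq_zero_of_abs_lt_dvd h3 ?_
    rw [abs_sub_lt_iff]; omega
  exact ZMod.val_injective ℓ (by omega)

lemma aux_div {ℓ M : ℕ} (hℓ : ℓ.Prime) {v : ZMod (ℓ ^ M)} (h : ℓ ∣ v.val) :
    ℓ • (((v.val / ℓ : ℕ)) : ZMod (ℓ ^ M)) = v := by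
  haveI : NeZero (ℓ ^ M) := ⟨pow_ne_zero _ hℓ.ne_zero⟩
  rw [nsmul_eq_mul, ← Nat.cast_mul, Nat.mul_div_cancel' h]
  exact ZMod.natCast_rightInverse v

lemma aux_key (ℓ : ℕ) (hℓ : ℓ.Prime) (r : ℕ) (m : Fin r → ℕ)
    (i : ℕ) (hi1 : 1 ≤ i) (hir : i ≤ r)
    (hm1 : ∀ j : Fin r, i ≤ (j : ℕ) + 1 → 1 ≤ m j)
    (H' : AddSubgroup (Π j : Fin r, ZMod (ℓ ^ m j)))
    (hquot : ∃ w : Fin (r - i) → ((Π j : Fin r, ZMod (ℓ ^ m j)) ⧸ H'),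
      AddSubgroup.closure (Set.range w) = ⊤) :
    ∃ x : (Π j : Fin r, ZMod (ℓ ^ m j)), x ∈ H' ∧
      (∀ j : Fin r, (j : ℕ) + 1 < i → x j = 0) ∧
      (∃ j : Fin r, i ≤ (j : ℕ) + 1 ∧ ¬ (ℓ ∣ (x j).val)) := by
  haveI : NeZero ℓ := ⟨hℓ.ne_zero⟩
  haveI : Fact (1 < ℓ) := ⟨hℓ.one_lt⟩
  haveI : ∀ j : Fin r, NeZero (ℓ ^ m j) := fun j => ⟨pow_ne_zero _ hℓ.ne_zero⟩
  haveI : ∀ j : Fin r, Finite (ZMod (ℓ ^ m j)) := fun j => Finite.of_fintype _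
  by_contra hcon
  push_neg at hcon
  obtain ⟨w, hw⟩ := hquot
  -- the subgroup L of x with low coordinates 0 and ℓ•x ∈ H'
  set L : AddSubgroup (Π j : Fin r, ZMod (ℓ ^ m j)) :=
    { carrier := {x | (∀ j : Fin r, (j : ℕ) + 1 < i → x j = 0) ∧ ℓ • x ∈ H'}
      zero_mem' := ⟨fun j _ => rfl, by simpa using H'.zero_mem⟩
      add_mem' := fun {a b} ha hb =>
        ⟨fun j hj => by rw [Pi.add_apply, ha.1 j hj, hb.1 j hj, add_zero],
         by rw [smul_add]; exact H'.add_mem ha.2 hb.2⟩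
      neg_mem' := fun {a} ha =>
        ⟨fun j hj => by rw [Pi.neg_apply, ha.1 j hj, neg_zero],
         by rw [smul_neg]; exact H'.neg_mem ha.2⟩ } with hLdef
  have hLmem : ∀ z : Π j : Fin r, ZMod (ℓ ^ m j),
      z ∈ L ↔ ((∀ j : Fin r, (j : ℕ) + 1 < i → z j = 0) ∧ ℓ • z ∈ H') := fun z => Iff.rfl
  set μ : ↥L →+ (Π j : Fin r, ZMod (ℓ ^ m j)) :=
    AddMonoidHom.mk' (fun x => ℓ • (x : Π j : Fin r, ZMod (ℓ ^ m j)))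
      (fun a b => by simp [smul_add]) with hμdef
  set φ : ↥L →+ ((Π j : Fin r, ZMod (ℓ ^ m j)) ⧸ H') :=
    (QuotientAddGroup.mk' H').comp L.subtype with hφdef
  set ψ : ((Π j : Fin r, ZMod (ℓ ^ m j)) ⧸ H') →+ ((Π j : Fin r, ZMod (ℓ ^ m j)) ⧸ H') :=
    AddMonoidHom.mk' (fun q => ℓ • q) (fun a b => by simp [nsmul_add]) with hψdef
  -- step 4 : lower bound on ker μ
  have hinj : ℓ ^ (r - i + 1) ≤ Nat.card μ.ker := by
    classical
    have e : {j : Fin r // i ≤ (j : ℕ) + 1} ≃ Fin (r - i + 1) :=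
      { toFun := fun s => ⟨(s.1 : ℕ) + 1 - i, by have := s.1.2; have := s.2; omega⟩
        invFun := fun k => ⟨⟨i - 1 + (k : ℕ), by have := k.2; omega⟩, by simp; omega⟩
        left_inv := fun s => by
          apply Subtype.ext; apply Fin.ext; have := s.2; simp; omega
        right_inv := fun k => by apply Fin.ext; simp; omega }
    have hcardS : Fintype.card {j : Fin r // i ≤ (j : ℕ) + 1} = r - i + 1 := by
      rw [Fintype.card_congr e, Fintype.card_fin]
    set F : ({j : Fin r // i ≤ (j : ℕ) + 1} → ZMod ℓ) → (Π j : Fin r, ZMod (ℓ ^ m j)) := fun c j =>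
      if h : i ≤ (j : ℕ) + 1 then
        (ℓ : ZMod (ℓ ^ m j)) ^ (m j - 1) * ((c ⟨j, h⟩).val : ZMod (ℓ ^ m j))
      else 0 with hFdef
    have hF0 : ∀ c, ℓ • F c = 0 := by
      intro c; funext j
      rw [Pi.smul_apply, Pi.zero_apply]
      by_cases h : i ≤ (j : ℕ) + 1
      · simp only [hFdef, dif_pos h]
        exact aux_kill (hm1 j h) _
      · simp only [hFdef, dif_neg h, smul_zero]
    have hFL : ∀ c, F c ∈ L := fun c =>
      ⟨fun j hj => by simp only [hFdef, dif_neg (show ¬ i ≤ (j : ℕ) + 1 by omega)],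
       by rw [hF0]; exact H'.zero_mem⟩
    have hFker : ∀ c, (⟨F c, hFL c⟩ : ↥L) ∈ μ.ker := by
      intro c
      rw [AddMonoidHom.mem_ker]
      exact hF0 c
    have hFinj : Function.Injective (fun c => (⟨⟨F c, hFL c⟩, hFker c⟩ : ↥μ.ker)) := by
      intro c c' h
      have h2 : F c = F c' := Subtype.ext_iff.mp (Subtype.ext_iff.mp h)
      funext s
      have h3 := congrFun h2 s.1
      simp only [hFdef, dif_pos s.2, Subtype.coe_eta] at h3
      exact aux_inj hℓ (hm1 s.1 s.2) h3
    calc ℓ ^ (r - i + 1) = Nat.card ({j : Fin r // i ≤ (j : ℕ) + 1} → ZMod ℓ) := by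
          rw [Nat.card_eq_fintype_card, Fintype.card_fun, ZMod.card, hcardS]
    _ ≤ Nat.card μ.ker := Nat.card_le_card_of_injective _ hFinj
  -- step 1/2 card identities
  haveI : Finite (Π j : Fin r, ZMod (ℓ ^ m j)) := by infer_instance
  have c1 : Nat.card ↥L = Nat.card μ.range * Nat.card μ.ker := aux_card_eq μ
  have c2 : Nat.card ↥L = Nat.card φ.range * Nat.card φ.ker := aux_card_eq φ
  -- step 2 : ker φ injects into range μ
  have c3 : Nat.card φ.ker ≤ Nat.card μ.range := by
    have hmem : ∀ x : ↥φ.ker, ((x : ↥L) : Π j : Fin r, ZMod (ℓ ^ m j)) ∈ μ.range := by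
      rintro ⟨⟨xP, hxL⟩, hxk⟩
      have hxA : ∀ j : Fin r, (j : ℕ) + 1 < i → xP j = 0 := ((hLmem xP).mp hxL).1
      have hxH' : xP ∈ H' := by
        rwa [AddMonoidHom.mem_ker, hφdef, AddMonoidHom.comp_apply, AddSubgroup.coe_subtype,
          QuotientAddGroup.mk'_apply, QuotientAddGroup.eq_zero_iff] at hxk
      have hdvd : ∀ j : Fin r, i ≤ (j : ℕ) + 1 → ℓ ∣ (xP j).val := hcon xP hxH' hxA
      classical
      refine ⟨⟨fun (j : Fin r) => if h : i ≤ (j : ℕ) + 1 then (((xP j).val / ℓ : ℕ) : ZMod (ℓ ^ m j)) else 0,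
        ?_⟩, ?_⟩
      · constructor
        · intro j hj
          simp only [dif_neg (show ¬ i ≤ (j : ℕ) + 1 by omega)]
        · have heq : ℓ • (fun (j : Fin r) => if h : i ≤ (j : ℕ) + 1 then
              (((xP j).val / ℓ : ℕ) : ZMod (ℓ ^ m j)) else 0) = xP := by
            funext j
            rw [Pi.smul_apply]
            by_cases h : i ≤ (j : ℕ) + 1
            · simp only [dif_pos h]; exact aux_div hℓ (hdvd j h)
            · simp only [dif_neg h, smul_zero]; exact (hxA j (by omega)).symm
          rw [heq]; exact hxH'
      · show ℓ • _ = xP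
        funext j
        rw [Pi.smul_apply]
        by_cases h : i ≤ (j : ℕ) + 1
        · simp only [dif_pos h]; exact aux_div hℓ (hdvd j h)
        · simp only [dif_neg h, smul_zero]; exact (hxA j (by omega)).symm
    refine Nat.card_le_card_of_injective (fun x => ⟨_, hmem x⟩) ?_
    intro x y h
    have h2 := congrArg Subtype.val h
    exact Subtype.ext (Subtype.ext h2)
  -- step 3 : ker μ ≤ range φ
  have hposμ : 0 < Nat.card μ.range := Nat.card_pos
  have c4 : Nat.card μ.ker ≤ Nat.card φ.range := by
    refine Nat.le_of_mul_le_mul_left ?_ hposμ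
    calc Nat.card μ.range * Nat.card μ.ker = Nat.card φ.range * Nat.card φ.ker := by
          rw [← c1, c2]
    _ ≤ Nat.card φ.range * Nat.card μ.range := Nat.mul_le_mul_left _ c3
    _ = Nat.card μ.range * Nat.card φ.range := Nat.mul_comm _ _
  -- step 5 : range φ injects into ker ψ
  have c5 : Nat.card φ.range ≤ Nat.card ψ.ker := by
    have hmem : ∀ y : ↥φ.range, (y : (Π j : Fin r, ZMod (ℓ ^ m j)) ⧸ H') ∈ ψ.ker := by
      rintro ⟨y, x, rfl⟩
      rw [AddMonoidHom.mem_ker]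
      show ℓ • φ x = 0
      rw [← map_nsmul, hφdef, AddMonoidHom.comp_apply, AddSubgroup.coe_subtype,
        QuotientAddGroup.mk'_apply, QuotientAddGroup.eq_zero_iff]
      have : ((ℓ • x : ↥L) : Π j : Fin r, ZMod (ℓ ^ m j)) = ℓ • (x : Π j : Fin r, ZMod (ℓ ^ m j)) := rfl
      rw [this]
      exact ((hLmem _).mp x.2).2
    refine Nat.card_le_card_of_injective (fun y => ⟨_, hmem y⟩) ?_
    intro x y h
    have h2 := congrArg Subtype.val h
    exact Subtype.ext h2
  -- step 6 : card of ker ψ = card of coker ψ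
  have c6 : Nat.card ψ.ker = Nat.card ((((Π j : Fin r, ZMod (ℓ ^ m j)) ⧸ H')) ⧸ ψ.range) := by
    have e1 := AddSubgroup.card_eq_card_quotient_mul_card_addSubgroup ψ.range
    have e2 := aux_card_eq ψ
    have hpos : 0 < Nat.card ψ.range := Nat.card_pos
    refine Nat.eq_of_mul_eq_mul_left hpos ?_
    calc Nat.card ψ.range * Nat.card ψ.ker = Nat.card _ := (aux_card_eq ψ).symm
    _ = Nat.card ((((Π j : Fin r, ZMod (ℓ ^ m j)) ⧸ H')) ⧸ ψ.range) * Nat.card ψ.range := e1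
    _ = Nat.card ψ.range * Nat.card ((((Π j : Fin r, ZMod (ℓ ^ m j)) ⧸ H')) ⧸ ψ.range) :=
        Nat.mul_comm _ _
  -- step 7 : coker ψ is generated by r - i elements of exponent ℓ
  have c7 : Nat.card ((((Π j : Fin r, ZMod (ℓ ^ m j)) ⧸ H')) ⧸ ψ.range) ≤ ℓ ^ (r - i) := by
    classical
    set π := QuotientAddGroup.mk' ψ.range with hπdef
    have hz : ∀ k, ℓ • (π (w k)) = 0 := by
      intro k
      rw [← map_nsmul, hπdef, QuotientAddGroup.mk'_apply, QuotientAddGroup.eq_zero_iff]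
      exact ⟨w k, rfl⟩
    have hsurj : Function.Surjective
        (fun c : Fin (r - i) → ZMod ℓ => ∑ k, (c k).val • π (w k)) := by
      intro qb
      obtain ⟨q, rfl⟩ := QuotientAddGroup.mk'_surjective ψ.range qb
      have hq : q ∈ AddSubgroup.closure (Set.range w) := hw ▸ AddSubgroup.mem_top q
      refine AddSubgroup.closure_induction
        (p := fun q _ => ∃ c : Fin (r - i) → ZMod ℓ, ∑ k, (c k).val • π (w k) = π q)
        ?_ ?_ ?_ ?_ hq
      · rintro x ⟨k, rfl⟩
        refine ⟨Pi.single k 1, ?_⟩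
        rw [Finset.sum_eq_single k]
        · rw [Pi.single_eq_same, ZMod.val_one, one_nsmul]
        · intro b _ hb
          rw [Pi.single_eq_of_ne hb, ZMod.val_zero, zero_nsmul]
        · intro hk; exact absurd (Finset.mem_univ k) hk
      · exact ⟨0, by simp [ZMod.val_zero, zero_nsmul]⟩
      · rintro x y hx hy ⟨cx, hcx⟩ ⟨cy, hcy⟩
        refine ⟨cx + cy, ?_⟩
        rw [map_add, ← hcx, ← hcy, ← Finset.sum_add_distrib]
        refine Finset.sum_congr rfl ?_
        intro k _
        rw [Pi.add_apply, ZMod.val_add, ← aux_smul_mod (π (w k)) (hz k) ((cx k).val + (cy k).val), add_nsmul]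
      · rintro x hx ⟨cx, hcx⟩
        refine ⟨-cx, ?_⟩
        have hterm : ∀ k : Fin (r - i), ((-cx) k).val • π (w k) = -((cx k).val • π (w k)) := by
          intro k
          rw [Pi.neg_apply]
          have h0 : (((-(cx k)).val + (cx k).val) • π (w k) : _) = 0 := by
            rw [aux_smul_mod (π (w k)) (hz k) _, ← ZMod.val_add, neg_add_cancel, ZMod.val_zero,
              zero_nsmul]
          rw [add_nsmul] at h0
          exact eq_neg_of_add_eq_zero_left h0
        calc ∑ k : Fin (r - i), ((-cx) k).val • π (w k)
            = ∑ k : Fin (r - i), -((cx k).val • π (w k)) :=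
              Finset.sum_congr rfl (fun k _ => hterm k)
        _ = -∑ k : Fin (r - i), (cx k).val • π (w k) := by rw [Finset.sum_neg_distrib]
        _ = π (-x) := by rw [hcx, map_neg]
    calc Nat.card ((((Π j : Fin r, ZMod (ℓ ^ m j)) ⧸ H')) ⧸ ψ.range)
        ≤ Nat.card (Fin (r - i) → ZMod ℓ) := Nat.card_le_card_of_surjective _ hsurj
    _ = ℓ ^ (r - i) := by rw [Nat.card_eq_fintype_card, Fintype.card_fun, ZMod.card, Fintype.card_fin]
  -- contradiction
  have hchain : ℓ ^ (r - i + 1) ≤ ℓ ^ (r - i) :=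
    le_trans hinj (le_trans c4 (le_trans c5 (le_of_eq c6 |>.trans c7)))
  have hlt : ℓ ^ (r - i) < ℓ ^ (r - i + 1) :=
    Nat.pow_lt_pow_right hℓ.one_lt (by omega)
  omega



/-- Combinatorial kernel of the key lemma: let `G = ⊕_{j=1}^r ℤ/ℓ^{m_j}` with
`m_1 ≤ … ≤ m_r` and standard generators `v_j`, and let `H' ⊆ G` be generated by
`u_1, …, u_i` of orders `ℓ^{n_1}, …, ℓ^{n_i}`.  If `G/H'` is generated by `r - i`
elements, then `H'` contains an element `v = Σ_{j ≥ i} a_j v_j` (supported on the top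
coordinates) with some coefficient `a_j` a unit modulo `ℓ`. -/
theorem exists_unit_combination_in_subgroup (ℓ : ℕ) (hℓ : ℓ.Prime)
    (r : ℕ) (m : Fin r → ℕ) (hm : Monotone m)
    (i : ℕ) (hi1 : 1 ≤ i) (hir : i ≤ r)
    (u : Fin i → (Π j : Fin r, ZMod (ℓ ^ m j)))
    (n : Fin i → ℕ) (hord : ∀ j : Fin i, addOrderOf (u j) = ℓ ^ n j)
    (H' : AddSubgroup (Π j : Fin r, ZMod (ℓ ^ m j)))
    (hH' : H' = AddSubgroup.closure (Set.range u))
    (hquot : ∃ w : Fin (r - i) → ((Π j : Fin r, ZMod (ℓ ^ m j)) ⧸ H'),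
      AddSubgroup.closure (Set.range w) = ⊤) :
    ∃ a : Fin r → ℤ,
      (∀ j : Fin r, (j : ℕ) + 1 < i → a j = 0) ∧
      (∃ j : Fin r, i ≤ (j : ℕ) + 1 ∧ ¬ ((ℓ : ℤ) ∣ a j)) ∧
      (∑ j : Fin r, a j • Pi.single j (1 : ZMod (ℓ ^ m j))) ∈ H' := by
  classical
  haveI : NeZero ℓ := ⟨hℓ.ne_zero⟩
  haveI : ∀ j : Fin r, NeZero (ℓ ^ m j) := fun j => ⟨pow_ne_zero _ hℓ.ne_zero⟩
  by_cases hm1 : ∀ j : Fin r, i ≤ (j : ℕ) + 1 → 1 ≤ m j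
  · obtain ⟨x, hxH, hxlow, j₀, hj₀, hdvd⟩ :=
      aux_key ℓ hℓ r m i hi1 hir hm1 H' hquot
    refine ⟨fun j => ((x j).val : ℤ), ?_, ⟨j₀, hj₀, ?_⟩, ?_⟩
    · intro j hj
      show ((x j).val : ℤ) = 0
      rw [hxlow j hj, ZMod.val_zero, Nat.cast_zero]
    · intro hc
      have hc' : (ℓ : ℤ) ∣ ((x j₀).val : ℤ) := hc
      exact hdvd (Int.natCast_dvd_natCast.mp hc')
    · have hsum : (∑ j : Fin r, ((x j).val : ℤ) • Pi.single j (1 : ZMod (ℓ ^ m j))) = x := by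
        funext k
        rw [Finset.sum_apply]
        rw [Finset.sum_eq_single k]
        · rw [Pi.smul_apply, Pi.single_eq_same, zsmul_eq_mul, mul_one, Int.cast_natCast]
          exact ZMod.natCast_rightInverse (x k)
        · intro b _ hb
          rw [Pi.smul_apply, Pi.single_eq_of_ne (Ne.symm hb), smul_zero]
        · intro hk; exact absurd (Finset.mem_univ k) hk
      show (∑ j : Fin r, ((x j).val : ℤ) • Pi.single j (1 : ZMod (ℓ ^ m j))) ∈ H'
      rw [hsum]; exact hxH
  · push_neg at hm1
    obtain ⟨j₀, hj₀top, hm0⟩ := hm1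
    have hm0' : m j₀ = 0 := by omega
    refine ⟨fun j => if j = j₀ then 1 else 0, ?_, ⟨j₀, hj₀top, ?_⟩, ?_⟩
    · intro j hj
      show (if j = j₀ then (1 : ℤ) else 0) = 0
      rw [if_neg]
      rintro rfl
      omega
    · show ¬ (ℓ : ℤ) ∣ (if j₀ = j₀ then (1 : ℤ) else 0)
      simp only [if_pos rfl]
      intro h
      have := Int.le_of_dvd one_pos h
      have := hℓ.two_le
      omega
    · have h1 : ℓ ^ m j₀ = 1 := by rw [hm0', pow_zero]
      have hsub : Subsingleton (ZMod (ℓ ^ m j₀)) := by rw [h1]; infer_instance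
      have hone : (1 : ZMod (ℓ ^ m j₀)) = 0 := @Subsingleton.elim _ hsub _ _
      have hsum : (∑ j : Fin r, (if j = j₀ then (1 : ℤ) else 0) • Pi.single j (1 : ZMod (ℓ ^ m j)))
          = 0 := by
        rw [Finset.sum_eq_single j₀]
        · rw [if_pos rfl, one_smul, hone, Pi.single_zero]
        · intro b _ hb
          rw [if_neg hb, zero_smul]
        · intro hk; exact absurd (Finset.mem_univ j₀) hk
      show (∑ j : Fin r, (if j = j₀ then (1 : ℤ) else 0) • Pi.single j (1 : ZMod (ℓ ^ m j))) ∈ H'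
      rw [hsum]; exact H'.zero_mem
end

section
/- Let ℓ be a prime, P ∈ ℤ_ℓ[t] monic of degree 2 with P(1) ≠ 0, m = v_ℓ(P(1)), and λ_1 ≤ λ_2 the valuations of the roots of P(1−t). Given integers 0 ≤ m_1 ≤ m_2 with m_1 + m_2 = m and m_1 ≤ λ_1, there exists a ℤ_ℓ[t]-module T, free of rank 2 over ℤ_ℓ, with characteristic polynomial of t equal to P, such that T/(1−t)T ≅ ℤ/ℓ^{m_1}ℤ ⊕ ℤ/ℓ^{m_2}ℤ. -/
open Polynomial
open scoped Classical

private theorem coker_aux (ℓ : ℕ) [Fact ℓ.Prime] (m₁ m₂ : ℕ) (β b' u : ℤ_[ℓ])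
    (hβ : β = (ℓ:ℤ_[ℓ])^m₁ * b') (ε : ℤ_[ℓ]ˣ) (hu : u = (ε : ℤ_[ℓ]) * (ℓ:ℤ_[ℓ])^m₂) :
    Nonempty (((Fin 2 → ℤ_[ℓ]) ⧸
        LinearMap.range (Matrix.toLin' !![β, -u; (ℓ:ℤ_[ℓ])^m₁, 0])) ≃+
      (ZMod (ℓ ^ m₁) × ZMod (ℓ ^ m₂))) := by
  letI : Module ℤ_[ℓ] (ZMod (ℓ^m₁)) := Module.compHom _ (PadicInt.toZModPow m₁)
  letI : Module ℤ_[ℓ] (ZMod (ℓ^m₂)) := Module.compHom _ (PadicInt.toZModPow m₂)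
  have hz : ∀ (k : ℕ) (y : ℤ_[ℓ]), PadicInt.toZModPow k ((ℓ:ℤ_[ℓ])^k * y) = 0 := by
    intro k y
    rw [map_mul]
    have h1 : (PadicInt.toZModPow (p := ℓ) k) ((ℓ:ℤ_[ℓ])^k) = 0 := by
      have : ((ℓ:ℤ_[ℓ]))^k = ((ℓ^k : ℕ) : ℤ_[ℓ]) := by push_cast; ring
      rw [this, map_natCast, ZMod.natCast_self]
    rw [h1, zero_mul]
  have hdvd : ∀ (k : ℕ) (y : ℤ_[ℓ]), PadicInt.toZModPow k y = 0 → (ℓ:ℤ_[ℓ])^k ∣ y := by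
    intro k y h
    have : y ∈ RingHom.ker (PadicInt.toZModPow (p := ℓ) k) := h
    rw [PadicInt.ker_toZModPow, Ideal.mem_span_singleton] at this
    exact this
  have hsurjZ : ∀ k : ℕ, Function.Surjective (PadicInt.toZModPow (p := ℓ) k) := by
    intro k x
    haveI : NeZero (ℓ ^ k) := ⟨pow_ne_zero k (Fact.out : ℓ.Prime).ne_zero⟩
    refine ⟨((x.val : ℕ) : ℤ_[ℓ]), ?_⟩
    rw [map_natCast]
    exact ZMod.natCast_rightInverse x
  set N : Matrix (Fin 2) (Fin 2) ℤ_[ℓ] := !![β, -u; (ℓ:ℤ_[ℓ])^m₁, 0] with hN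
  have hsmul₁ : ∀ (r : ℤ_[ℓ]) (x : ZMod (ℓ^m₁)), r • x = PadicInt.toZModPow m₁ r * x :=
    fun r x => rfl
  have hsmul₂ : ∀ (r : ℤ_[ℓ]) (x : ZMod (ℓ^m₂)), r • x = PadicInt.toZModPow m₂ r * x :=
    fun r x => rfl
  let g : (Fin 2 → ℤ_[ℓ]) →ₗ[ℤ_[ℓ]] (ZMod (ℓ^m₁) × ZMod (ℓ^m₂)) :=
    { toFun := fun v => (PadicInt.toZModPow m₁ (v 1), PadicInt.toZModPow m₂ (v 0 - b' * v 1))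
      map_add' := by
        intro v w
        simp only [Pi.add_apply, Prod.mk_add_mk, Prod.mk.injEq]
        constructor
        · rw [map_add]
        · rw [← map_add]; ring_nf
      map_smul' := by
        intro r v
        simp only [Pi.smul_apply, smul_eq_mul, RingHom.id_apply, Prod.smul_mk, hsmul₁, hsmul₂,
          Prod.mk.injEq]
        constructor
        · rw [map_mul]
        · rw [← map_mul]; ring_nf }
  have hmul : ∀ w : Fin 2 → ℤ_[ℓ],
      N.mulVec w = ![β * w 0 - u * w 1, (ℓ:ℤ_[ℓ])^m₁ * w 0] := by
    intro w
    funext i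
    fin_cases i <;>
      simp [hN, Matrix.mulVec, dotProduct, Fin.sum_univ_two] <;> ring
  have hker : LinearMap.range (Matrix.toLin' N) = LinearMap.ker g := by
    ext v
    constructor
    · rintro ⟨w, rfl⟩
      simp only [LinearMap.mem_ker, Matrix.toLin'_apply, hmul]
      have : g ![β * w 0 - u * w 1, (ℓ:ℤ_[ℓ])^m₁ * w 0] =
          (PadicInt.toZModPow m₁ ((ℓ:ℤ_[ℓ])^m₁ * w 0),
           PadicInt.toZModPow m₂ ((β * w 0 - u * w 1) - b' * ((ℓ:ℤ_[ℓ])^m₁ * w 0))) := rfl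
      rw [this, Prod.mk_eq_zero]
      refine ⟨hz m₁ (w 0), ?_⟩
      have h2 : (β * w 0 - u * w 1) - b' * ((ℓ:ℤ_[ℓ])^m₁ * w 0)
          = (ℓ:ℤ_[ℓ])^m₂ * (-(ε:ℤ_[ℓ]) * w 1) := by
        rw [hβ, hu]; ring
      rw [h2]; exact hz m₂ _
    · intro hv
      have hv1 : PadicInt.toZModPow m₁ (v 1) = 0 := congrArg Prod.fst hv
      have hv0 : PadicInt.toZModPow m₂ (v 0 - b' * v 1) = 0 := congrArg Prod.snd hv
      obtain ⟨s, hs⟩ := hdvd _ _ hv1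
      obtain ⟨r, hr⟩ := hdvd _ _ hv0
      have hinv : (ε:ℤ_[ℓ]) * ((ε⁻¹:ℤ_[ℓ]ˣ):ℤ_[ℓ]) = 1 := by exact_mod_cast ε.mul_inv
      refine ⟨![s, -(((ε⁻¹:ℤ_[ℓ]ˣ):ℤ_[ℓ]) * r)], ?_⟩
      rw [Matrix.toLin'_apply, hmul]
      funext i
      fin_cases i
      · show β * s - u * (-(((ε⁻¹:ℤ_[ℓ]ˣ):ℤ_[ℓ]) * r)) = v 0
        have hv0' : v 0 = b' * v 1 + (ℓ:ℤ_[ℓ])^m₂ * r := by rw [← hr]; ring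
        rw [hv0', hs, hβ, hu]
        linear_combination ((ℓ:ℤ_[ℓ])^m₂ * r) * hinv
      · show (ℓ:ℤ_[ℓ])^m₁ * s = v 1
        rw [hs]
  have hsurj : Function.Surjective g := by
    intro ⟨x, y⟩
    obtain ⟨a, ha⟩ := hsurjZ m₁ x
    obtain ⟨cc, hcc⟩ := hsurjZ m₂ y
    refine ⟨![cc + b' * a, a], ?_⟩
    show (PadicInt.toZModPow m₁ a, PadicInt.toZModPow m₂ (cc + b' * a - b' * a)) = (x, y)
    rw [ha]
    congr 1
    rw [← hcc]; ring_nf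
  exact ⟨((Submodule.quotEquivOfEq _ _ hker).trans
    (g.quotKerEquivOfSurjective hsurj)).toAddEquiv⟩

private theorem charpoly_aux (ℓ : ℕ) [Fact ℓ.Prime] (a b c d : ℤ_[ℓ]) :
    (Matrix.toLin' !![a, b; c, d]).charpoly
      = X ^ 2 + C (-(a + d)) * X + C (a * d - b * c) := by
  rw [← LinearMap.charpoly_toMatrix (Matrix.toLin' !![a, b; c, d]) (Pi.basisFun ℤ_[ℓ] (Fin 2)),
    LinearMap.toMatrix_eq_toMatrix', LinearMap.toMatrix'_toLin']
  rw [Matrix.charpoly, Matrix.det_fin_two]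
  simp [Matrix.charmatrix_apply_eq, Matrix.charmatrix_apply_ne]
  ring

/-- Rank-2 existence theorem: given monic `P ∈ ℤ_ℓ[t]` of degree 2 with `P(1) ≠ 0`,
`m = v_ℓ(P(1))`, `λ₁` the smaller Newton-polygon slope of `P(1-t)`, and integers
`0 ≤ m₁ ≤ m₂` with `m₁ + m₂ = m` and `m₁ ≤ λ₁`, there exists a `ℤ_ℓ[t]`-module `T`,
free of rank 2 over `ℤ_ℓ`, with characteristic polynomial of `t` equal to `P` and
`T/(1-t)T ≅ ℤ/ℓ^{m₁} ⊕ ℤ/ℓ^{m₂}`. -/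
theorem rank_two_module_exists (ℓ : ℕ) [Fact ℓ.Prime]
    (P : Polynomial ℤ_[ℓ]) (hP : P.Monic) (hdeg : P.natDegree = 2) (hP1 : P.eval 1 ≠ 0)
    (m : ℕ) (hm : (P.eval 1).valuation = (m : ℤ))
    (lam1 : ℚ)
    (hlam1 : lam1 = if (P.comp (1 - Polynomial.X)).coeff 1 = 0 then (m : ℚ) / 2
      else min ((((P.comp (1 - Polynomial.X)).coeff 1).valuation : ℚ)) ((m : ℚ) / 2))
    (m₁ m₂ : ℕ) (h12 : m₁ ≤ m₂) (hsum : m₁ + m₂ = m) (hle : (m₁ : ℚ) ≤ lam1) :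
    ∃ (T : Type) (_ : AddCommGroup T) (_ : Module ℤ_[ℓ] T)
      (_ : Module.Free ℤ_[ℓ] T) (_ : Module.Finite ℤ_[ℓ] T)
      (φ : T →ₗ[ℤ_[ℓ]] T),
      Module.finrank ℤ_[ℓ] T = 2 ∧ LinearMap.charpoly φ = P ∧
      Nonempty ((T ⧸ LinearMap.range (LinearMap.id - φ)) ≃+
        (ZMod (ℓ ^ m₁) × ZMod (ℓ ^ m₂))) := by
  have hPexp : P = X ^ 2 + C (P.coeff 1) * X + C (P.coeff 0) := by
    ext n
    match n with
    | 0 => simp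
    | 1 => simp [coeff_X]
    | 2 => simpa [coeff_X, hdeg] using (hdeg ▸ hP.coeff_natDegree)
    | (n+3) =>
      rw [P.coeff_eq_zero_of_natDegree_lt (by omega)]
      simp [coeff_X, coeff_X_pow, coeff_C]
  have hQ1 : (P.comp (1 - X)).coeff 1 = -(2 + P.coeff 1) := by
    conv_lhs => rw [hPexp]
    simp [add_comp, mul_comp, pow_comp, sub_sq, coeff_one, coeff_X, mul_sub, sub_mul, coeff_C]
    ring
  have heval : P.eval 1 = 1 + P.coeff 1 + P.coeff 0 := by
    conv_lhs => rw [hPexp]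
    simp
  have hdvd : ∀ (k : ℕ) (x : ℤ_[ℓ]), (k:ℤ) ≤ x.valuation → (ℓ:ℤ_[ℓ])^k ∣ x := by
    intro k x h
    by_cases hx : x = 0
    · simp [hx]
    · exact (Ideal.mem_span_singleton).mp
        ((PadicInt.mem_span_pow_iff_le_valuation x hx k).mpr (by exact_mod_cast h))
  have hβdvd : (ℓ:ℤ_[ℓ])^m₁ ∣ (2 + P.coeff 1) := by
    by_cases h0 : (P.comp (1 - X)).coeff 1 = 0
    · rw [hQ1, neg_eq_zero] at h0
      rw [h0]; exact dvd_zero _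
    · have h1 : (m₁ : ℚ) ≤ (((P.comp (1 - X)).coeff 1).valuation : ℚ) := by
        rw [hlam1, if_neg h0] at hle
        exact hle.trans (min_le_left _ _)
      have h2 : (m₁ : ℤ) ≤ ((P.comp (1 - X)).coeff 1).valuation := by exact_mod_cast h1
      have := hdvd m₁ _ h2
      rw [hQ1] at this
      exact (dvd_neg).mp this
  obtain ⟨b', hb'⟩ := hβdvd
  have hm1m : m₁ ≤ m := by omega
  obtain ⟨u, hcu⟩ := hdvd m₁ (P.eval 1) (by rw [hm]; exact_mod_cast hm1m)
  have hu0 : u ≠ 0 := by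
    rintro rfl
    rw [mul_zero] at hcu
    exact hP1 hcu
  have hvu : u.valuation = (m₂ : ℤ) := by
    have := PadicInt.valuation_p_pow_mul m₁ u hu0
    rw [← hcu, show (P.eval 1).valuation = m by exact_mod_cast hm] at this
    omega
  set ε : ℤ_[ℓ]ˣ := PadicInt.unitCoeff hu0 with hε
  have huspec : u = (ε:ℤ_[ℓ]) * (ℓ:ℤ_[ℓ])^m₂ := by
    have := PadicInt.unitCoeff_spec hu0
    rw [show u.valuation = m₂ by exact_mod_cast hvu] at this
    simpa using this
  -- the matrix and the module
  obtain ⟨a1, ha1⟩ : ∃ a, P.coeff 1 = a := ⟨_, rfl⟩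
  obtain ⟨a0, ha0⟩ : ∃ a, P.coeff 0 = a := ⟨_, rfl⟩
  rw [ha1, ha0] at hPexp
  rw [ha1] at hb'
  rw [ha1, ha0] at heval
  set M : Matrix (Fin 2) (Fin 2) ℤ_[ℓ] :=
    !![-1 - a1, u; -(ℓ:ℤ_[ℓ])^m₁, 1] with hM
  refine ⟨Fin 2 → ℤ_[ℓ], inferInstance, inferInstance, inferInstance, inferInstance,
    Matrix.toLin' M, ?_, ?_, ?_⟩
  · exact Module.finrank_fin_fun ℤ_[ℓ]
  · rw [hM, charpoly_aux]
    have e1 : -((-1 - a1) + 1) = a1 := by ring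
    have e2 : (-1 - a1) * 1 - u * (-(ℓ:ℤ_[ℓ])^m₁) = a0 := by
      rw [heval] at hcu
      linear_combination -hcu
    rw [e1, e2, hPexp]
  · have hid : LinearMap.id - Matrix.toLin' M
        = Matrix.toLin' !![2 + a1, -u; (ℓ:ℤ_[ℓ])^m₁, 0] := by
      apply LinearMap.ext; intro v
      rw [LinearMap.sub_apply, LinearMap.id_apply, Matrix.toLin'_apply, Matrix.toLin'_apply]
      funext i
      fin_cases i <;>
        simp [hM, Matrix.mulVec, dotProduct, Fin.sum_univ_two] <;> ring
    rw [hid]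
    exact coker_aux ℓ m₁ m₂ (2 + a1) b' u hb' ε huspec
end
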